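/- arXiv:2002.00002 — 9 statements merged into one kernel-verified Lean document; each statement's English description precedes it below -/
import Mathlib

section
/- For the complete bipartite graph K_{p,q} with 2 ≤ p ≤ q, the independent secure domination number equals p (one side of the bipartition of size p forms a minimum independent secure dominating set). -/
variable {V : Type*} [Fintype V] [DecidableEq V]

/-- `S` is a dominating set of `G`: every vertex is in `S` or adjacent to a vertex of `S`. -/
def DomSet (G : SimpleGraph V) (S : Finset V) : Prop :=
  ∀ v : V, v ∈ S ∨ ∃ u ∈ S, G.Adj u v

/-- `S` is a secure dominating set of `G`. -/
def SecDomSet (G : SimpleGraph V) (S : Finset V) : Prop :=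
  DomSet G S ∧ ∀ u ∉ S, ∃ v ∈ S, G.Adj u v ∧ DomSet G (insert u (S.erase v))

/-- `S` is an independent set of `G`. -/
def IndepSet (G : SimpleGraph V) (S : Finset V) : Prop :=
  ∀ a ∈ S, ∀ b ∈ S, ¬ G.Adj a b

/-- `S` is an independent secure dominating set of `G`. -/
def InSDS (G : SimpleGraph V) (S : Finset V) : Prop :=
  IndepSet G S ∧ SecDomSet G S

/-- The independent secure domination number `γ_is(G)`. -/
noncomputable def gammaIS (G : SimpleGraph V) : ℕ :=
  sInf {k | ∃ S : Finset V, InSDS G S ∧ S.card = k}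

theorem stmt3 (p q : ℕ) (hp : 2 ≤ p) (hpq : p ≤ q) :
    gammaIS (completeBipartiteGraph (Fin p) (Fin q)) = p ∧
    InSDS (completeBipartiteGraph (Fin p) (Fin q))
      (Finset.univ.image (Sum.inl : Fin p → Fin p ⊕ Fin q)) := by
  set G := completeBipartiteGraph (Fin p) (Fin q)
  set S : Finset (Fin p ⊕ Fin q) := Finset.univ.image Sum.inl with hS
  have hmemS : ∀ a : Fin p, Sum.inl a ∈ S := fun a => Finset.mem_image_of_mem _ (Finset.mem_univ a)
  have hnot : ∀ b : Fin q, Sum.inr b ∉ S := by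
    intro b hb
    simp [hS] at hb
  have hInSDS : InSDS G S := by
    refine ⟨?_, ?_, ?_⟩
    · rintro a ha b hb hab
      simp only [hS, Finset.mem_image] at ha hb
      obtain ⟨a', -, rfl⟩ := ha
      obtain ⟨b', -, rfl⟩ := hb
      simp [G] at hab
    · intro v
      rcases v with a | b
      · exact Or.inl (hmemS a)
      · exact Or.inr ⟨Sum.inl ⟨0, by omega⟩, hmemS _, by simp [G]⟩
    · intro u hu
      rcases u with a | b
      · exact absurd (hmemS a) hu
      · refine ⟨Sum.inl ⟨0, by omega⟩, hmemS _, by simp [G], ?_⟩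
        intro v
        rcases v with a | b'
        · by_cases ha : a = ⟨0, by omega⟩
          · subst ha
            exact Or.inr ⟨Sum.inr b, Finset.mem_insert_self _ _, by simp [G]⟩
          · exact Or.inl (Finset.mem_insert_of_mem (Finset.mem_erase.2 ⟨by simpa using ha, hmemS a⟩))
        · refine Or.inr ⟨Sum.inl ⟨1, by omega⟩, ?_, by simp [G]⟩
          exact Finset.mem_insert_of_mem (Finset.mem_erase.2 ⟨by simp [Fin.ext_iff], hmemS _⟩)
  have hcard : S.card = p := by
    rw [hS, Finset.card_image_of_injective _ Sum.inl_injective, Finset.card_univ, Fintype.card_fin]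
  refine ⟨?_, hInSDS⟩
  have hmem : p ∈ {k | ∃ T : Finset (Fin p ⊕ Fin q), InSDS G T ∧ T.card = k} := ⟨S, hInSDS, hcard⟩
  refine le_antisymm (Nat.sInf_le hmem) ?_
  refine le_csInf ⟨p, hmem⟩ ?_
  rintro k ⟨T, ⟨hTi, hTd, -⟩, rfl⟩
  -- T is independent dominating; show p ≤ T.card
  by_cases hL : ∃ a : Fin p, Sum.inl a ∈ T
  · -- then no inr in T, so all inl must be in T
    obtain ⟨a0, ha0⟩ := hL
    have hNR : ∀ b : Fin q, Sum.inr b ∉ T := by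
      intro b hb
      exact hTi _ ha0 _ hb (by simp [G])
    have hAll : ∀ a : Fin p, Sum.inl a ∈ T := by
      intro a
      rcases hTd (Sum.inl a) with h | ⟨u, hu, hadj⟩
      · exact h
      · rcases u with a' | b'
        · simp [G] at hadj
        · exact absurd hu (hNR b')
    calc p = (Finset.univ.image (Sum.inl : Fin p → Fin p ⊕ Fin q)).card := hcard.symm
      _ ≤ T.card := Finset.card_le_card (by
          intro x hx
          simp only [Finset.mem_image] at hx
          obtain ⟨a, -, rfl⟩ := hx
          exact hAll a)
  · push_neg at hL
    have hAll : ∀ b : Fin q, Sum.inr b ∈ T := by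
      intro b
      rcases hTd (Sum.inr b) with h | ⟨u, hu, hadj⟩
      · exact h
      · rcases u with a' | b'
        · exact absurd hu (hL a')
        · simp [G] at hadj
    have : q ≤ T.card := by
      calc q = (Finset.univ.image (Sum.inr : Fin q → Fin p ⊕ Fin q)).card := by
            rw [Finset.card_image_of_injective _ Sum.inr_injective, Finset.card_univ, Fintype.card_fin]
        _ ≤ T.card := Finset.card_le_card (by
            intro x hx
            simp only [Finset.mem_image] at hx
            obtain ⟨b, -, rfl⟩ := hx
            exact hAll b)
    omega
end

section
/- For the path graph P_n on n ≥ 4 vertices, the independent secure domination number equals ⌈3n/7⌉. -/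
set_option maxHeartbeats 1000000

variable {V : Type*} [Fintype V] [DecidableEq V]

def pQ (n v : ℕ) : Prop :=
  v < n ∧ (((v % 7 = 1 ∨ v % 7 = 3 ∨ v % 7 = 5) ∧ (v + n % 7 < n ∨ n % 7 = 4 ∨ n % 7 = 6)) ∨
    ((v % 7 = 0 ∨ v % 7 = 2 ∨ v % 7 = 4) ∧ n ≤ v + n % 7 ∧ n % 7 ≠ 4 ∧ n % 7 ≠ 6))

def sg (n j : ℕ) : ℕ :=
  if j < 3 * (n / 7) then 7 * (j / 3) + 2 * (j % 3) + 1
  else 7 * (n / 7) + 2 * (j - 3 * (n / 7)) + (if n % 7 = 4 ∨ n % 7 = 6 then 1 else 0)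

theorem sg_lt_and_Q {n j : ℕ} (hn : 4 ≤ n) (hj : j < (3 * n + 6) / 7) :
    sg n j < n ∧ pQ n (sg n j) := by
  have hd : j ≤ 3 * (n / 7) + 2 := by omega
  unfold sg pQ
  split_ifs with hb ht
  · have h1 : (7 * (j / 3) + 2 * (j % 3) + 1) % 7 = 2 * (j % 3) + 1 := by omega
    omega
  · have h1 : (7 * (n / 7) + 2 * (j - 3 * (n / 7)) + 1) % 7 = 2 * (j - 3 * (n / 7)) + 1 := by
      omega
    omega
  · have h1 : (7 * (n / 7) + 2 * (j - 3 * (n / 7)) + 0) % 7 = 2 * (j - 3 * (n / 7)) := by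
      omega
    omega

theorem sg_mono {n j j' : ℕ} (h : j < j') (hj : j' < (3 * n + 6) / 7) :
    sg n j < sg n j' := by
  unfold sg
  split_ifs <;> omega

theorem sg_surj {n v : ℕ} (hn : 4 ≤ n) (hQ : pQ n v) :
    ∃ j, j < (3 * n + 6) / 7 ∧ sg n j = v := by
  have hv7 : v = 7 * (v / 7) + v % 7 := by omega
  unfold pQ at hQ
  by_cases hb : v + n % 7 < n
  · refine ⟨3 * (v / 7) + (v % 7) / 2, ?_⟩
    have h2 : (3 * (v / 7) + (v % 7) / 2) % 3 = (v % 7) / 2 := by omega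
    have h3 : (3 * (v / 7) + (v % 7) / 2) / 3 = v / 7 := by omega
    unfold sg; split_ifs <;> omega
  · refine ⟨3 * (n / 7) + (v - 7 * (n / 7)) / 2, ?_⟩
    unfold sg; split_ifs <;> omega

theorem pQ_lt {n v : ℕ} (h : pQ n v) : v < n := h.1

theorem pQ_indep {n v : ℕ} (h : pQ n v) (h2 : pQ n (v + 1)) : False := by
  unfold pQ at *; omega

theorem pQ_sec_key {n s : ℕ} (hn : 4 ≤ n) (hu : s + 3 < n) (h : ¬ pQ n (s + 3)) :
    (pQ n (s + 4) ∧ (n ≤ s + 5 ∨ pQ n (s + 6))) ∨ (pQ n (s + 2) ∧ pQ n s) := by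
  have h7 : n % 7 = 0 ∨ n % 7 = 1 ∨ n % 7 = 2 ∨ n % 7 = 3 ∨ n % 7 = 4 ∨ n % 7 = 5 ∨ n % 7 = 6 := by
    omega
  have h8 : s % 7 = 0 ∨ s % 7 = 1 ∨ s % 7 = 2 ∨ s % 7 = 3 ∨ s % 7 = 4 ∨ s % 7 = 5 ∨ s % 7 = 6 := by
    omega
  unfold pQ at *
  rcases h7 with h7|h7|h7|h7|h7|h7|h7 <;> rcases h8 with h8|h8|h8|h8|h8|h8|h8 <;>
    simp [h7, h8, Nat.add_mod s] at h ⊢ <;> omega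

theorem pQ_sec {n u : ℕ} (hn : 4 ≤ n) (hu : u < n) (h : ¬ pQ n u) :
    (u + 1 < n ∧ pQ n (u + 1) ∧ (n ≤ u + 2 ∨ pQ n (u + 3))) ∨
    (1 ≤ u ∧ pQ n (u - 1) ∧ (u = 1 ∨ (3 ≤ u ∧ pQ n (u - 3)))) := by
  rcases lt_or_ge u 3 with h3 | h3
  · have h7 : n % 7 = 0 ∨ n % 7 = 1 ∨ n % 7 = 2 ∨ n % 7 = 3 ∨ n % 7 = 4 ∨ n % 7 = 5 ∨
        n % 7 = 6 := by omega
    unfold pQ at *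
    interval_cases u <;> rcases h7 with h7|h7|h7|h7|h7|h7|h7 <;> omega
  · obtain ⟨s, rfl⟩ : ∃ s, u = s + 3 := ⟨u - 3, by omega⟩
    rcases pQ_sec_key hn hu h with ⟨h1, h2⟩ | ⟨h1, h2⟩
    · exact Or.inl ⟨pQ_lt h1, h1, h2⟩
    · exact Or.inr ⟨by omega, h1, Or.inr ⟨by omega, h2⟩⟩

theorem adj_of_val {n : ℕ} {a b : Fin n} (h : a.val + 1 = b.val ∨ b.val + 1 = a.val) :
    (SimpleGraph.pathGraph n).Adj a b := SimpleGraph.pathGraph_adj.mpr h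

theorem domset_swap {G : SimpleGraph V} {S : Finset V} {u v : V} (hD : DomSet G S)
    (hv : v ∈ S) (hadj : G.Adj u v)
    (hcov : ∀ w, G.Adj w v → w ≠ u →
      w ∈ insert u (S.erase v) ∨ ∃ x ∈ insert u (S.erase v), G.Adj x w) :
    DomSet G (insert u (S.erase v)) := by
  intro w
  by_cases hwu : w = u
  · subst hwu; exact Or.inl (Finset.mem_insert_self w _)
  by_cases hwv : w = v
  · exact Or.inr ⟨u, Finset.mem_insert_self u _, hwv ▸ hadj⟩
  rcases hD w with hw | ⟨x, hx, hxw⟩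
  · exact Or.inl (Finset.mem_insert_of_mem (Finset.mem_erase.mpr ⟨hwv, hw⟩))
  · by_cases hxv : x = v
    · subst hxv
      exact hcov w hxw.symm hwu
    · exact Or.inr ⟨x, Finset.mem_insert_of_mem (Finset.mem_erase.mpr ⟨hxv, hx⟩), hxw⟩

theorem upper_exists (n : ℕ) (hn : 4 ≤ n) :
    ∃ S : Finset (Fin n), InSDS (SimpleGraph.pathGraph n) S ∧ S.card = (3 * n + 6) / 7 := by
  classical
  have hσ : ∀ j : Fin ((3 * n + 6) / 7), sg n j.val < n := fun j => (sg_lt_and_Q hn j.isLt).1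
  set σ : Fin ((3 * n + 6) / 7) → Fin n := fun j => ⟨sg n j.val, hσ j⟩ with hσdef
  have hσinj : Function.Injective σ := by
    intro a b hab
    by_contra hne
    have hne' : a.val ≠ b.val := fun e => hne (Fin.ext e)
    have hab' : sg n a.val = sg n b.val := congrArg Fin.val hab
    rcases Nat.lt_or_ge a.val b.val with h | h
    · exact absurd hab' (Nat.ne_of_lt (sg_mono h b.isLt))
    · exact absurd hab'.symm (Nat.ne_of_lt (sg_mono (by omega) a.isLt))
  set S : Finset (Fin n) := Finset.image σ Finset.univ with hSdef
  have hmem : ∀ v : Fin n, v ∈ S ↔ pQ n v.val := by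
    intro v
    simp only [hSdef, Finset.mem_image, Finset.mem_univ, true_and]
    constructor
    · rintro ⟨j, rfl⟩; exact (sg_lt_and_Q hn j.isLt).2
    · intro hQ
      obtain ⟨j, hj, he⟩ := sg_surj hn hQ
      exact ⟨⟨j, hj⟩, Fin.ext he⟩
  have hcard : S.card = (3 * n + 6) / 7 := by
    rw [hSdef, Finset.card_image_of_injective _ hσinj, Finset.card_univ, Fintype.card_fin]
  have hDom : DomSet (SimpleGraph.pathGraph n) S := by
    intro w
    by_cases hq : pQ n w.val
    · exact Or.inl ((hmem w).mpr hq)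
    · rcases pQ_sec hn w.isLt hq with ⟨h1, h2, _⟩ | ⟨h1, h2, _⟩
      · exact Or.inr ⟨⟨w.val + 1, h1⟩, (hmem _).mpr h2, adj_of_val (Or.inr rfl)⟩
      · exact Or.inr ⟨⟨w.val - 1, by omega⟩, (hmem _).mpr h2,
          adj_of_val (Or.inl (by simp only []; omega))⟩
  have hIndep : IndepSet (SimpleGraph.pathGraph n) S := by
    intro a ha b hb hadj
    rw [hmem] at ha hb
    rcases SimpleGraph.pathGraph_adj.mp hadj with h | h
    · exact pQ_indep ha (by rwa [← h] at hb)
    · exact pQ_indep hb (by rwa [← h] at ha)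
  refine ⟨S, ⟨hIndep, hDom, ?_⟩, hcard⟩
  intro u hu
  have hq : ¬ pQ n u.val := fun h => hu ((hmem u).mpr h)
  rcases pQ_sec hn u.isLt hq with ⟨h1, h2, h3⟩ | ⟨h1, h2, h3⟩
  · -- swap with right neighbour u+1
    set v : Fin n := ⟨u.val + 1, h1⟩ with hvdef
    have hvval : v.val = u.val + 1 := rfl
    have hadj : (SimpleGraph.pathGraph n).Adj u v := adj_of_val (Or.inl hvval.symm)
    refine ⟨v, (hmem _).mpr h2, hadj, domset_swap hDom ((hmem _).mpr h2) hadj ?_⟩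
    intro w hwv hwu
    have hw' : w.val + 1 = u.val + 1 ∨ u.val + 1 + 1 = w.val := by
      rcases SimpleGraph.pathGraph_adj.mp hwv with hw | hw
      · exact Or.inl (by rw [hw, hvval])
      · exact Or.inr (by rw [← hw, hvval])
    rcases hw' with hw | hw
    · exact absurd (Fin.ext (by omega : w.val = u.val)) hwu
    · have hw2 : w.val = u.val + 2 := by omega
      have h4 : pQ n (u.val + 3) := by
        rcases h3 with h3 | h3
        · exact absurd h3 (by have := w.isLt; omega)
        · exact h3
      right
      refine ⟨⟨u.val + 3, pQ_lt h4⟩, Finset.mem_insert_of_mem (Finset.mem_erase.mpr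
        ⟨fun e => by have : u.val + 3 = v.val := congrArg Fin.val e; omega,
          (hmem _).mpr h4⟩), adj_of_val (Or.inr ?_)⟩
      show w.val + 1 = u.val + 3
      omega
  · -- swap with left neighbour u-1
    set v : Fin n := ⟨u.val - 1, by omega⟩ with hvdef
    have hvval : v.val = u.val - 1 := rfl
    have hadj : (SimpleGraph.pathGraph n).Adj u v :=
      adj_of_val (Or.inr (by rw [hvval]; omega))
    refine ⟨v, (hmem _).mpr h2, hadj, domset_swap hDom ((hmem _).mpr h2) hadj ?_⟩
    intro w hwv hwu
    have hw' : w.val + 1 = u.val - 1 ∨ u.val - 1 + 1 = w.val := by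
      rcases SimpleGraph.pathGraph_adj.mp hwv with hw | hw
      · exact Or.inl (by rw [hw, hvval])
      · exact Or.inr (by rw [← hw, hvval])
    rcases hw' with hw | hw
    · have hu2 : 2 ≤ u.val := by omega
      have h4 : 3 ≤ u.val ∧ pQ n (u.val - 3) := by
        rcases h3 with h3 | h3
        · omega
        · exact h3
      right
      refine ⟨⟨u.val - 3, pQ_lt h4.2⟩, Finset.mem_insert_of_mem (Finset.mem_erase.mpr
        ⟨fun e => by have : u.val - 3 = v.val := congrArg Fin.val e; rw [hvval] at this; omega,
          (hmem _).mpr h4.2⟩), adj_of_val (Or.inl ?_)⟩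
      show u.val - 3 + 1 = w.val
      omega
    · exact absurd (Fin.ext (by omega : w.val = u.val)) hwu

/-- membership of a natural number value in `S` -/
def Mv {n : ℕ} (S : Finset (Fin n)) (t : ℕ) : Prop := ∃ s ∈ S, s.val = t

theorem Mv_lt {n : ℕ} {S : Finset (Fin n)} {t : ℕ} (h : Mv S t) : t < n := by
  obtain ⟨s, _, rfl⟩ := h; exact s.isLt

theorem adj_of_val' {n : ℕ} {a b : Fin n} (h : a.val + 1 = b.val ∨ b.val + 1 = a.val) :
    (SimpleGraph.pathGraph n).Adj a b := SimpleGraph.pathGraph_adj.mpr h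

theorem dom_bridge {n : ℕ} {S : Finset (Fin n)} (hD : DomSet (SimpleGraph.pathGraph n) S)
    (t : ℕ) (ht : t < n) :
    Mv S t ∨ (1 ≤ t ∧ Mv S (t - 1)) ∨ (t + 1 < n ∧ Mv S (t + 1)) := by
  rcases hD ⟨t, ht⟩ with h | ⟨x, hx, hadj⟩
  · exact Or.inl ⟨_, h, rfl⟩
  · rcases SimpleGraph.pathGraph_adj.mp hadj with h | h
    · have h' : x.val + 1 = t := h
      exact Or.inr (Or.inl ⟨by omega, ⟨x, hx, by omega⟩⟩)
    · have h' : t + 1 = x.val := h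
      exact Or.inr (Or.inr ⟨by have := x.isLt; omega, ⟨x, hx, by omega⟩⟩)

theorem indep_bridge {n : ℕ} {S : Finset (Fin n)} (hI : IndepSet (SimpleGraph.pathGraph n) S)
    {t : ℕ} (h1 : Mv S t) (h2 : Mv S (t + 1)) : False := by
  obtain ⟨s1, hs1, he1⟩ := h1
  obtain ⟨s2, hs2, he2⟩ := h2
  exact hI s1 hs1 s2 hs2 (adj_of_val' (Or.inl (by omega)))

theorem sec_bridge {n : ℕ} {S : Finset (Fin n)} (hs : SecDomSet (SimpleGraph.pathGraph n) S)
    (t : ℕ) (ht : t < n) (hM : ¬ Mv S t) :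
    ∃ w, Mv S w ∧ (w + 1 = t ∨ t + 1 = w) ∧
      ∀ x, x < n → (x = t ∨ (Mv S x ∧ x ≠ w)) ∨
        (1 ≤ x ∧ (x - 1 = t ∨ (Mv S (x - 1) ∧ x - 1 ≠ w))) ∨
        (x + 1 < n ∧ (x + 1 = t ∨ (Mv S (x + 1) ∧ x + 1 ≠ w))) := by
  have hu : (⟨t, ht⟩ : Fin n) ∉ S := fun hmem => hM ⟨_, hmem, rfl⟩
  obtain ⟨v, hv, hadj, hD'⟩ := hs.2 ⟨t, ht⟩ hu
  have hmm : ∀ y : Fin n, y ∈ insert (⟨t, ht⟩ : Fin n) (S.erase v) ↔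
      (y.val = t ∨ (Mv S y.val ∧ y.val ≠ v.val)) := by
    intro y
    simp only [Finset.mem_insert, Finset.mem_erase]
    constructor
    · rintro (rfl | ⟨hne, hmemS⟩)
      · exact Or.inl rfl
      · exact Or.inr ⟨⟨y, hmemS, rfl⟩, fun e => hne (Fin.ext e)⟩
    · rintro (he | ⟨⟨s, hsS, hsval⟩, hne⟩)
      · exact Or.inl (Fin.ext he)
      · have hsy : s = y := Fin.ext hsval
        subst hsy
        exact Or.inr ⟨fun e => hne (congrArg Fin.val e), hsS⟩
  refine ⟨v.val, ⟨v, hv, rfl⟩, ?_, ?_⟩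
  · rcases SimpleGraph.pathGraph_adj.mp hadj with h | h
    · exact Or.inr (h : t + 1 = v.val)
    · exact Or.inl (h : v.val + 1 = t)
  · intro x hx
    rcases hD' ⟨x, hx⟩ with h | ⟨z, hz, hadj2⟩
    · exact Or.inl ((hmm _).mp h)
    · have hz' := (hmm z).mp hz
      rcases SimpleGraph.pathGraph_adj.mp hadj2 with h | h
      · have h' : z.val + 1 = x := h
        refine Or.inr (Or.inl ⟨by omega, ?_⟩)
        have e : z.val = x - 1 := by omega
        rw [e] at hz'
        exact hz'
      · have h' : x + 1 = z.val := h
        refine Or.inr (Or.inr ⟨by have := z.isLt; omega, ?_⟩)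
        have e : z.val = x + 1 := by omega
        rw [e] at hz'
        exact hz'

theorem vsum (v : ℕ → ℕ) : ∀ m : ℕ, (∀ i, i + 1 ≤ m → v (i + 1) ≤ v i + 3) →
    (∀ i, i + 2 ≤ m → v (i + 2) ≤ v i + 5) → (∀ i, i + 3 ≤ m → v (i + 3) ≤ v i + 7) →
    3 * v m ≤ 3 * v 0 + 7 * m + 2 := by
  intro m
  induction m using Nat.strong_induction_on with
  | _ m ih =>
    intro h1 h2 h3
    rcases lt_or_ge m 3 with hm | hm
    · interval_cases m
      · omega
      · have := h1 0 (by omega); simp only [Nat.zero_add] at this; omega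
      · have := h2 0 (by omega); simp only [Nat.zero_add] at this; omega
    · obtain ⟨m', rfl⟩ : ∃ m', m = m' + 3 := ⟨m - 3, by omega⟩
      have hIH := ih m' (by omega) (fun i hi => h1 i (by omega)) (fun i hi => h2 i (by omega))
        (fun i hi => h3 i (by omega))
      have hstep := h3 m' (by omega)
      omega

theorem gap_sum (n k : ℕ) (v : ℕ → ℕ) (hn : 4 ≤ n) (hk : 1 ≤ k)
    (hg2 : ∀ i, i + 1 < k → v i + 2 ≤ v (i + 1))
    (hg3 : ∀ i, i + 1 < k → v (i + 1) ≤ v i + 3)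
    (hW2 : ∀ i, i + 2 < k → v (i + 2) ≤ v i + 5)
    (hW3 : ∀ i, i + 3 < k → v (i + 3) ≤ v i + 7)
    (ha : v 0 ≤ 1) (hb : n ≤ v (k - 1) + 2) (hbn : v (k - 1) < n)
    (hA : v 0 = 1 → 2 ≤ k ∧ v 1 = 3)
    (hA2 : v 0 = 1 → 3 ≤ k → v 2 = 5)
    (hB : v (k - 1) = n - 2 → 2 ≤ k ∧ v (k - 2) = n - 4)
    (hB2 : v (k - 1) = n - 2 → 3 ≤ k → v (k - 3) = n - 6)
    (hexcl : ¬(k = 2 ∧ v 0 = 1 ∧ v 1 = n - 2)) :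
    3 * n ≤ 7 * k := by
  rcases eq_or_lt_of_le hk with hk1 | hk2
  · -- k = 1
    exfalso
    have : v (k - 1) = v 0 := by rw [← hk1]
    omega
  -- now 2 ≤ k
  by_cases hbc : v (k - 1) = n - 2
  · obtain ⟨hk2', hvk2⟩ := hB hbc
    by_cases hac : v 0 = 1
    · obtain ⟨_, hv1⟩ := hA hac
      rcases lt_or_ge k 5 with hk5 | hk5
      · interval_cases k
        · -- k = 2
          exact absurd ⟨rfl, hac, by rw [show (2:ℕ) - 1 = 1 from rfl] at hbc; exact hbc⟩ hexcl
        · -- k = 3 : v 1 = n - 4 and v 1 = 3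
          simp only [show (3:ℕ) - 2 = 1 from rfl] at hvk2
          omega
        · -- k = 4 : v 2 = n - 4 and v 2 = 5
          have hv2 := hA2 hac (by omega)
          simp only [show (4:ℕ) - 2 = 2 from rfl] at hvk2
          omega
      · -- k ≥ 5
        have hv2 := hA2 hac (by omega)
        have hvk3 := hB2 hbc (by omega)
        have hsum := vsum (fun i => v (i + 2)) (k - 5)
          (fun i hi => hg3 (i + 2) (by omega))
          (fun i hi => hW2 (i + 2) (by omega))
          (fun i hi => hW3 (i + 2) (by omega))
        simp only [Nat.zero_add] at hsum
        rw [show k - 5 + 2 = k - 3 from by omega] at hsum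
        omega
    · -- v 0 = 0
      have ha0 : v 0 = 0 := by omega
      rcases lt_or_ge k 3 with hk3 | hk3
      · -- k = 2 : v 0 = n - 4 = 0
        interval_cases k
        simp only [show (2:ℕ) - 2 = 0 from rfl] at hvk2
        omega
      · have hvk3 := hB2 hbc hk3
        have hsum := vsum v (k - 3)
          (fun i hi => hg3 i (by omega))
          (fun i hi => hW2 i (by omega))
          (fun i hi => hW3 i (by omega))
        omega
  · -- v (k-1) = n - 1
    have hbc' : v (k - 1) = n - 1 := by omega
    by_cases hac : v 0 = 1
    · obtain ⟨hk2', hv1⟩ := hA hac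
      rcases lt_or_ge k 3 with hk3 | hk3
      · interval_cases k
        simp only [show (2:ℕ) - 1 = 1 from rfl] at hbc'
        omega
      · have hv2 := hA2 hac hk3
        have hsum := vsum (fun i => v (i + 2)) (k - 3)
          (fun i hi => hg3 (i + 2) (by omega))
          (fun i hi => hW2 (i + 2) (by omega))
          (fun i hi => hW3 (i + 2) (by omega))
        simp only [Nat.zero_add] at hsum
        rw [show k - 3 + 2 = k - 1 from by omega] at hsum
        omega
    · have ha0 : v 0 = 0 := by omega
      have hsum := vsum v (k - 1)
        (fun i hi => hg3 i (by omega))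
        (fun i hi => hW2 i (by omega))
        (fun i hi => hW3 i (by omega))
      omega

theorem lower_bound {n : ℕ} (hn : 4 ≤ n) {S : Finset (Fin n)}
    (hS : InSDS (SimpleGraph.pathGraph n) S) : 3 * n ≤ 7 * S.card := by
  have hI := hS.1
  have hDm := hS.2.1
  have hsc := hS.2.2
  have hsd : SecDomSet (SimpleGraph.pathGraph n) S := ⟨hDm, hsc⟩
  classical
  -- enumeration
  set e : Fin S.card ↪o Fin n := S.orderEmbOfFin rfl with hedef
  set vv : ℕ → ℕ := fun i => if h : i < S.card then (e ⟨i, h⟩).val else 0 with hvvdef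
  have hvmem : ∀ i, i < S.card → Mv S (vv i) := by
    intro i h
    refine ⟨e ⟨i, h⟩, Finset.orderEmbOfFin_mem S rfl ⟨i, h⟩, ?_⟩
    simp only [hvvdef, dif_pos h]
  have hvlt : ∀ i, i < S.card → vv i < n := fun i h => Mv_lt (hvmem i h)
  have hmono : ∀ i j, i < j → j < S.card → vv i < vv j := by
    intro i j hij hj
    have h1 : i < S.card := by omega
    have := e.strictMono (show (⟨i, h1⟩ : Fin S.card) < ⟨j, hj⟩ from hij)
    simp only [hvvdef, dif_pos h1, dif_pos hj]
    exact this
  have hsurj : ∀ t, Mv S t → ∃ i, i < S.card ∧ vv i = t := by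
    rintro t ⟨s, hs, rfl⟩
    have hrange : s ∈ Set.range e := by
      rw [Finset.range_orderEmbOfFin]
      exact hs
    obtain ⟨j, hj⟩ := hrange
    refine ⟨j.val, j.isLt, ?_⟩
    simp only [hvvdef, dif_pos j.isLt]
    exact congrArg Fin.val hj
  have hmin : ∀ t, Mv S t → vv 0 ≤ t := by
    intro t hM
    obtain ⟨j, hj, rfl⟩ := hsurj t hM
    rcases Nat.eq_zero_or_pos j with rfl | hpos
    · exact le_refl _
    · exact le_of_lt (hmono 0 j hpos hj)
  have hmax : ∀ t, Mv S t → t ≤ vv (S.card - 1) := by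
    intro t hM
    obtain ⟨j, hj, rfl⟩ := hsurj t hM
    rcases eq_or_lt_of_le (show j ≤ S.card - 1 by omega) with he | hlt
    · rw [he]
    · exact le_of_lt (hmono j (S.card - 1) hlt (by omega))
  have hbetween : ∀ i t, i + 1 < S.card → Mv S t → t ≤ vv i ∨ vv (i + 1) ≤ t := by
    intro i t h1 hM
    obtain ⟨j, hj, rfl⟩ := hsurj t hM
    rcases le_or_gt j i with h | h
    · left
      rcases eq_or_lt_of_le h with rfl | hlt
      · exact le_refl _
      · exact le_of_lt (hmono j i hlt (by omega))
    · right
      rcases eq_or_lt_of_le (show i + 1 ≤ j from h) with rfl | hlt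
      · exact le_refl _
      · exact le_of_lt (hmono (i + 1) j hlt hj)
  have hnb : ∀ i t, i + 1 < S.card → vv i < t → t < vv (i + 1) → ¬ Mv S t := by
    intro i t h1 hl hr hM
    rcases hbetween i t h1 hM with h | h <;> omega
  have hk1 : 1 ≤ S.card := by
    rcases dom_bridge hDm 0 (by omega) with h | ⟨h1, _⟩ | ⟨_, h⟩
    · obtain ⟨s, hs, _⟩ := h; exact Finset.card_pos.mpr ⟨s, hs⟩
    · omega
    · obtain ⟨s, hs, _⟩ := h; exact Finset.card_pos.mpr ⟨s, hs⟩
  -- gap bounds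
  have hg2 : ∀ i, i + 1 < S.card → vv i + 2 ≤ vv (i + 1) := by
    intro i h
    have h1 := hmono i (i + 1) (by omega) h
    by_contra hlt
    have he : vv (i + 1) = vv i + 1 := by omega
    exact indep_bridge hI (hvmem i (by omega)) (he ▸ hvmem (i + 1) h)
  have hg3 : ∀ i, i + 1 < S.card → vv (i + 1) ≤ vv i + 3 := by
    intro i h
    by_contra hlt
    push_neg at hlt
    have hlt2 : vv i + 2 < n := by have := hvlt (i + 1) h; omega
    rcases dom_bridge hDm (vv i + 2) hlt2 with hc | ⟨_, hc⟩ | ⟨_, hc⟩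
    · exact hnb i _ h (by omega) (by omega) hc
    · rw [show vv i + 2 - 1 = vv i + 1 from by omega] at hc
      exact hnb i _ h (by omega) (by omega) hc
    · exact hnb i _ h (by omega) (by omega) hc
  -- secure lemmas
  have hSL : ∀ i, i + 1 < S.card → vv (i + 1) = vv i + 3 →
      vv i = 0 ∨ (2 ≤ vv i ∧ Mv S (vv i - 2)) := by
    intro i hik hgap
    have hu_lt : vv i + 1 < n := by have := hvlt (i + 1) hik; omega
    have hunot : ¬ Mv S (vv i + 1) := hnb i _ hik (by omega) (by omega)
    obtain ⟨w, hwM, hwadj, hR⟩ := sec_bridge hsd _ hu_lt hunot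
    have hw : w = vv i := by
      rcases hwadj with h | h
      · omega
      · exact absurd hwM (hnb i w hik (by omega) (by omega))
    subst hw
    rcases Nat.eq_zero_or_pos (vv i) with h0 | h0
    · exact Or.inl h0
    rcases hR (vv i - 1) (by omega) with (hc | ⟨hc1, hc⟩ | ⟨hc1, hc⟩)
    · rcases hc with hc | ⟨hcM, _⟩
      · omega
      · exfalso
        refine indep_bridge hI hcM ?_
        rw [show vv i - 1 + 1 = vv i from by omega]
        exact hvmem i (by omega)
    · rcases hc with hc | ⟨hcM, _⟩
      · omega
      · refine Or.inr ⟨by omega, ?_⟩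
        rwa [show vv i - 1 - 1 = vv i - 2 from by omega] at hcM
    · rcases hc with hc | ⟨hcM, hcne⟩
      · omega
      · exfalso
        rw [show vv i - 1 + 1 = vv i from by omega] at hcne
        exact hcne rfl
  have hSR : ∀ i, i + 1 < S.card → vv (i + 1) = vv i + 3 →
      vv (i + 1) = n - 1 ∨ Mv S (vv (i + 1) + 2) := by
    intro i hik hgap
    have hu_lt : vv i + 2 < n := by have := hvlt (i + 1) hik; omega
    have hunot : ¬ Mv S (vv i + 2) := hnb i _ hik (by omega) (by omega)
    obtain ⟨w, hwM, hwadj, hR⟩ := sec_bridge hsd _ hu_lt hunot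
    have hw : w = vv (i + 1) := by
      rcases hwadj with h | h
      · exact absurd hwM (hnb i w hik (by omega) (by omega))
      · omega
    subst hw
    rcases Nat.eq_or_lt_of_le (show vv (i + 1) + 1 ≤ n from hvlt (i + 1) hik) with hend | hend
    · exact Or.inl (by omega)
    rcases hR (vv (i + 1) + 1) (by omega) with (hc | ⟨hc1, hc⟩ | ⟨hc1, hc⟩)
    · rcases hc with hc | ⟨hcM, _⟩
      · omega
      · exact absurd hcM (fun h => indep_bridge hI (hvmem (i + 1) hik) h)
    · rcases hc with hc | ⟨hcM, hcne⟩
      · omega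
      · exfalso
        rw [show vv (i + 1) + 1 - 1 = vv (i + 1) from by omega] at hcne
        exact hcne rfl
    · rcases hc with hc | ⟨hcM, _⟩
      · omega
      · exact Or.inr hcM
  have hS2 : ∀ i, i + 1 < S.card → vv (i + 1) = vv i + 2 →
      (vv i = 0 ∨ (2 ≤ vv i ∧ Mv S (vv i - 2))) ∨
      (vv (i + 1) = n - 1 ∨ Mv S (vv (i + 1) + 2)) := by
    intro i hik hgap
    have hu_lt : vv i + 1 < n := by have := hvlt (i + 1) hik; omega
    have hunot : ¬ Mv S (vv i + 1) := hnb i _ hik (by omega) (by omega)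
    obtain ⟨w, hwM, hwadj, hR⟩ := sec_bridge hsd _ hu_lt hunot
    have hw : w = vv i ∨ w = vv (i + 1) := by
      rcases hwadj with h | h
      · exact Or.inl (by omega)
      · exact Or.inr (by omega)
    rcases hw with hw | hw
    · subst hw
      left
      rcases Nat.eq_zero_or_pos (vv i) with h0 | h0
      · exact Or.inl h0
      rcases hR (vv i - 1) (by omega) with (hc | ⟨hc1, hc⟩ | ⟨hc1, hc⟩)
      · rcases hc with hc | ⟨hcM, _⟩
        · omega
        · exfalso
          refine indep_bridge hI hcM ?_
          rw [show vv i - 1 + 1 = vv i from by omega]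
          exact hvmem i (by omega)
      · rcases hc with hc | ⟨hcM, _⟩
        · omega
        · refine Or.inr ⟨by omega, ?_⟩
          rwa [show vv i - 1 - 1 = vv i - 2 from by omega] at hcM
      · rcases hc with hc | ⟨hcM, hcne⟩
        · omega
        · exfalso
          rw [show vv i - 1 + 1 = vv i from by omega] at hcne
          exact hcne rfl
    · subst hw
      right
      rcases Nat.eq_or_lt_of_le (show vv (i + 1) + 1 ≤ n from hvlt (i + 1) hik) with hend | hend
      · exact Or.inl (by omega)
      rcases hR (vv (i + 1) + 1) (by omega) with (hc | ⟨hc1, hc⟩ | ⟨hc1, hc⟩)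
      · rcases hc with hc | ⟨hcM, _⟩
        · omega
        · exact absurd hcM (fun h => indep_bridge hI (hvmem (i + 1) hik) h)
      · rcases hc with hc | ⟨hcM, hcne⟩
        · omega
        · exfalso
          rw [show vv (i + 1) + 1 - 1 = vv (i + 1) from by omega] at hcne
          exact hcne rfl
      · rcases hc with hc | ⟨hcM, _⟩
        · omega
        · exact Or.inr hcM
  -- window facts
  have hW2 : ∀ i, i + 2 < S.card → vv (i + 2) ≤ vv i + 5 := by
    intro i h
    by_contra hlt
    push_neg at hlt
    have h1 := hg2 i (by omega)
    have h2 := hg2 (i + 1) (by omega)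
    have h3 := hg3 i (by omega)
    have h4 := hg3 (i + 1) (by omega)
    rw [show i + 1 + 1 = i + 2 from rfl] at h2 h4
    have hgi : vv (i + 1) = vv i + 3 := by omega
    rcases hSR i (by omega) hgi with hc | hc
    · have := hvlt (i + 2) h; omega
    · have hnb2 := hnb (i + 1) (vv (i + 1) + 2) h
      rw [show i + 1 + 1 = i + 2 from rfl] at hnb2
      exact hnb2 (by omega) (by omega) hc
  have hW3 : ∀ i, i + 3 < S.card → vv (i + 3) ≤ vv i + 7 := by
    intro i h
    by_contra hlt
    push_neg at hlt
    have h1 := hg2 i (by omega)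
    have h2 := hg2 (i + 1) (by omega)
    have h3 := hg2 (i + 2) (by omega)
    have h4 := hg3 i (by omega)
    have h5 := hg3 (i + 1) (by omega)
    have h6 := hg3 (i + 2) (by omega)
    rw [show i + 1 + 1 = i + 2 from rfl] at h2 h5
    rw [show i + 2 + 1 = i + 3 from rfl] at h3 h6
    have hw2a := hW2 i (by omega)
    have hw2b := hW2 (i + 1) (by omega)
    rw [show i + 1 + 2 = i + 3 from rfl] at hw2b
    -- forces pattern 3,2,3
    have hgi : vv (i + 1) = vv i + 3 := by omega
    have hgm : vv (i + 2) = vv (i + 1) + 2 := by omega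
    have hge : vv (i + 3) = vv (i + 2) + 3 := by omega
    rcases hS2 (i + 1) (by omega) hgm with (hc | ⟨_, hc⟩) | (hc | hc)
    · omega
    · rw [show vv (i + 1) - 2 = vv i + 1 from by omega] at hc
      exact hnb i _ (by omega) (by omega) (by omega) hc
    · rw [show i + 1 + 1 = i + 2 from rfl] at hc
      have := hvlt (i + 3) h; omega
    · rw [show i + 1 + 1 = i + 2 from rfl] at hc
      have hnb2 := hnb (i + 2) (vv (i + 2) + 2) h
      rw [show i + 2 + 1 = i + 3 from rfl] at hnb2
      exact hnb2 (by omega) (by omega) hc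
  -- boundary facts
  have ha : vv 0 ≤ 1 := by
    rcases dom_bridge hDm 0 (by omega) with h | ⟨h1, _⟩ | ⟨_, h⟩
    · exact le_trans (hmin 0 h) (by omega)
    · omega
    · exact hmin 1 h
  have hb : n ≤ vv (S.card - 1) + 2 := by
    rcases dom_bridge hDm (n - 1) (by omega) with h | ⟨h1, h⟩ | ⟨h1, _⟩
    · have := hmax _ h; omega
    · have := hmax _ h; omega
    · omega
  have hA : vv 0 = 1 → 2 ≤ S.card ∧ vv 1 = 3 := by
    intro h0
    have hM1 : Mv S 1 := h0 ▸ hvmem 0 (by omega)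
    have hnot0 : ¬ Mv S 0 := fun h => by have := hmin 0 h; omega
    obtain ⟨w, hwM, hwadj, hR⟩ := sec_bridge hsd 0 (by omega) hnot0
    have hw : w = 1 := by omega
    subst hw
    have hM3 : Mv S 3 := by
      rcases hR 2 (by omega) with (hc | ⟨_, hc⟩ | ⟨_, hc⟩)
      · rcases hc with hc | ⟨hcM, _⟩
        · omega
        · exact absurd hcM (fun h => indep_bridge hI hM1 h)
      · rcases hc with hc | ⟨_, hcne⟩
        · omega
        · omega
      · rcases hc with hc | ⟨hcM, _⟩
        · omega
        · exact hcM
    obtain ⟨j, hj, hje⟩ := hsurj 3 hM3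
    have hjne : j ≠ 0 := fun e => by rw [e] at hje; omega
    have hk2 : 2 ≤ S.card := by omega
    refine ⟨hk2, ?_⟩
    rcases hbetween 0 3 (by omega) hM3 with h | h
    · omega
    · have := hg2 0 (by omega)
      simp only [Nat.zero_add] at this h
      omega
  have hA2 : vv 0 = 1 → 3 ≤ S.card → vv 2 = 5 := by
    intro h0 hk3
    obtain ⟨hk2, hv1⟩ := hA h0
    rcases hS2 0 (by omega) (by simp only [Nat.zero_add]; omega) with (hc | ⟨h2c, hc⟩) | (hc | hc)
    · omega
    · omega
    · simp only [Nat.zero_add] at hc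
      have := hmono 1 2 (by omega) (by omega)
      have := hvlt 2 (by omega)
      omega
    · simp only [Nat.zero_add, hv1] at hc
      rcases hbetween 1 5 (by omega) hc with h | h
      · omega
      · rw [show (1:ℕ) + 1 = 2 from rfl] at h
        have h5 := hg2 1 (by omega)
        rw [show (1:ℕ) + 1 = 2 from rfl] at h5
        omega
  have hB : vv (S.card - 1) = n - 2 → 2 ≤ S.card ∧ vv (S.card - 2) = n - 4 := by
    intro hlast
    have hMn2 : Mv S (n - 2) := hlast ▸ hvmem (S.card - 1) (by omega)
    have hnotn1 : ¬ Mv S (n - 1) := fun h => by have := hmax _ h; omega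
    obtain ⟨w, hwM, hwadj, hR⟩ := sec_bridge hsd (n - 1) (by omega) hnotn1
    have hw : w = n - 2 := by
      rcases hwadj with h | h
      · omega
      · exact absurd (Mv_lt hwM) (by omega)
    subst hw
    have hMn4 : Mv S (n - 4) := by
      rcases hR (n - 3) (by omega) with (hc | ⟨_, hc⟩ | ⟨_, hc⟩)
      · rcases hc with hc | ⟨hcM, _⟩
        · omega
        · exfalso
          refine indep_bridge hI hcM ?_
          rwa [show n - 3 + 1 = n - 2 from by omega]
      · rcases hc with hc | ⟨hcM, _⟩
        · omega
        · rwa [show n - 3 - 1 = n - 4 from by omega] at hcM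
      · rcases hc with hc | ⟨_, hcne⟩
        · omega
        · exfalso
          rw [show n - 3 + 1 = n - 2 from by omega] at hcne
          exact hcne rfl
    obtain ⟨j, hj, hje⟩ := hsurj (n - 4) hMn4
    have hjne : j ≠ S.card - 1 := fun e => by rw [e] at hje; omega
    have hk2 : 2 ≤ S.card := by
      by_contra hc
      have hk1' : S.card = 1 := by omega
      omega
    refine ⟨hk2, ?_⟩
    rcases hbetween (S.card - 2) (n - 4) (by omega) hMn4 with h | h
    · have := hg2 (S.card - 2) (by omega)
      rw [show S.card - 2 + 1 = S.card - 1 from by omega] at this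
      omega
    · rw [show S.card - 2 + 1 = S.card - 1 from by omega] at h
      omega
  have hB2 : vv (S.card - 1) = n - 2 → 3 ≤ S.card → vv (S.card - 3) = n - 6 := by
    intro hlast hk3
    obtain ⟨hk2, hvk2⟩ := hB hlast
    have hgap : vv (S.card - 2 + 1) = vv (S.card - 2) + 2 := by
      rw [show S.card - 2 + 1 = S.card - 1 from by omega]
      omega
    rcases hS2 (S.card - 2) (by omega) hgap with (hc | ⟨h2c, hc⟩) | (hc | hc)
    · have := hmono (S.card - 3) (S.card - 2) (by omega) (by omega)
      omega
    · rw [show vv (S.card - 2) - 2 = n - 6 from by omega] at hc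
      rcases hbetween (S.card - 3) (n - 6) (by omega) hc with h | h
      · have := hg2 (S.card - 3) (by omega)
        rw [show S.card - 3 + 1 = S.card - 2 from by omega] at this
        omega
      · rw [show S.card - 3 + 1 = S.card - 2 from by omega] at h
        omega
    · rw [show S.card - 2 + 1 = S.card - 1 from by omega] at hc
      omega
    · rw [show S.card - 2 + 1 = S.card - 1 from by omega] at hc
      have := Mv_lt hc
      omega
  have hexcl : ¬(S.card = 2 ∧ vv 0 = 1 ∧ vv 1 = n - 2) := by
    rintro ⟨hk2, h0, h1⟩
    obtain ⟨_, hv1⟩ := hA h0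
    have hn5 : n = 5 := by omega
    rcases hS2 0 (by omega) (by simp only [Nat.zero_add]; omega) with (hc | ⟨h2c, hc⟩) | (hc | hc)
    · omega
    · omega
    · simp only [Nat.zero_add] at hc
      omega
    · simp only [Nat.zero_add] at hc
      have := Mv_lt hc
      omega
  exact gap_sum n S.card vv hn hk1 hg2 hg3 hW2 hW3 ha hb (hvlt _ (by omega)) hA hA2 hB hB2 hexcl

theorem stmt6 (n : ℕ) (hn : 4 ≤ n) :
    gammaIS (SimpleGraph.pathGraph n) = (3 * n + 6) / 7 := by
  obtain ⟨S, hS, hcard⟩ := upper_exists n hn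
  have hmem : (3 * n + 6) / 7 ∈
      {k | ∃ T : Finset (Fin n), InSDS (SimpleGraph.pathGraph n) T ∧ T.card = k} :=
    ⟨S, hS, hcard⟩
  unfold gammaIS
  apply le_antisymm
  · exact Nat.sInf_le hmem
  · refine le_csInf ⟨_, hmem⟩ ?_
    rintro b ⟨T, hT, rfl⟩
    have h := lower_bound hn hT
    omega
end

section
/- For the cycle graph C_n with n ≥ 4 and n ≠ 5, the independent secure domination number equals ⌈3n/7⌉. -/
variable {V : Type*} [Fintype V] [DecidableEq V]

instance (G : SimpleGraph V) [DecidableRel G.Adj] (S : Finset V) : Decidable (DomSet G S) := by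
  unfold DomSet; infer_instance

instance (G : SimpleGraph V) [DecidableRel G.Adj] (S : Finset V) : Decidable (SecDomSet G S) := by
  unfold SecDomSet; infer_instance

instance (G : SimpleGraph V) [DecidableRel G.Adj] (S : Finset V) : Decidable (IndepSet G S) := by
  unfold IndepSet; infer_instance

instance (G : SimpleGraph V) [DecidableRel G.Adj] (S : Finset V) : Decidable (InSDS G S) := by
  unfold InSDS; infer_instance

namespace CycAux

open Fin.CommRing

variable {n : ℕ} [NeZero n]

lemma val1 (hn : 2 ≤ n) : ((1:Fin n)).val = 1 := by
  rw [Fin.val_one']; exact Nat.mod_eq_of_lt (by omega)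

lemma adj_iff (hn : 3 ≤ n) (u v : Fin n) :
    (SimpleGraph.cycleGraph n).Adj u v ↔ u = v + 1 ∨ v = u + 1 := by
  rw [SimpleGraph.cycleGraph_adj']
  have h1 : ∀ a b : Fin n, (a - b).val = 1 ↔ a = b + 1 := by
    intro a b
    rw [show (1:ℕ) = ((1:Fin n)).val from (val1 (by omega)).symm, Fin.val_inj,
      sub_eq_iff_eq_add, add_comm]
  rw [h1, h1]

lemma exists_adj_iff (hn : 3 ≤ n) (T : Finset (Fin n)) (v : Fin n) :
    (∃ u ∈ T, (SimpleGraph.cycleGraph n).Adj u v) ↔ v + 1 ∈ T ∨ v - 1 ∈ T := by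
  constructor
  · rintro ⟨u, hu, hadj⟩
    rcases (adj_iff hn u v).1 hadj with h | h
    · left; rw [← h]; exact hu
    · right; rw [h]; simpa using hu
  · rintro (h | h)
    · exact ⟨v + 1, h, (adj_iff hn _ _).2 (Or.inl rfl)⟩
    · exact ⟨v - 1, h, (adj_iff hn _ _).2 (Or.inr (by ring))⟩

lemma dom_iff (hn : 3 ≤ n) (T : Finset (Fin n)) :
    DomSet (SimpleGraph.cycleGraph n) T ↔ ∀ v : Fin n, v ∈ T ∨ v + 1 ∈ T ∨ v - 1 ∈ T := by
  unfold DomSet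
  refine forall_congr' fun v => ?_
  rw [exists_adj_iff hn]

lemma off_inj (hn : 7 ≤ n) (i : Fin n) {a b : ℕ} (ha : a < 7) (hb : b < 7) :
    i + (a : Fin n) = i + (b : Fin n) ↔ a = b := by
  rw [add_right_inj, ← Fin.val_inj,
    Fin.val_cast_of_lt (by omega), Fin.val_cast_of_lt (by omega)]

lemma off_succ (i : Fin n) (a : ℕ) : i + (a : Fin n) + 1 = i + ((a+1 : ℕ) : Fin n) := by
  push_cast; ring

lemma off_pred (i : Fin n) (a : ℕ) : i + ((a+1 : ℕ) : Fin n) - 1 = i + (a : Fin n) := by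
  push_cast; ring

lemma off_zero (i : Fin n) : i + ((0 : ℕ) : Fin n) = i := by push_cast; ring



variable {n : ℕ} [NeZero n]

def of (i : Fin n) (a : ℕ) : Fin n := i + (a : Fin n)

lemma of_succ (i : Fin n) (a : ℕ) : of i a + 1 = of i (a+1) := by
  unfold of; push_cast; ring

lemma of_pred (i : Fin n) (a : ℕ) : of i (a+1) - 1 = of i a := by
  unfold of; push_cast; ring

lemma of_zero (i : Fin n) : of i 0 = i := by unfold of; push_cast; ring

lemma of_inj' (hn : 7 ≤ n) (i : Fin n) {a b : ℕ} (ha : a < 7) (hb : b < 7) :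
    of i a = of i b ↔ a = b := by
  unfold of; exact off_inj hn i ha hb

lemma of_ne (hn : 7 ≤ n) (i : Fin n) {a b : ℕ} (ha : a < 7) (hb : b < 7) (h : a ≠ b) :
    of i a ≠ of i b := fun he => h ((of_inj' hn i ha hb).1 he)

section Facts

variable {S : Finset (Fin n)}

lemma memT {u v z : Fin n} : z ∈ insert u (S.erase v) ↔ z = u ∨ (z ≠ v ∧ z ∈ S) := by
  simp [Finset.mem_insert, Finset.mem_erase]

variable (hn : 7 ≤ n) (hS : InSDS (SimpleGraph.cycleGraph n) S)

include hn hS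

lemma hI_of : ∀ v : Fin n, v ∈ S → v + 1 ∉ S := by
  intro v hv hv1
  exact hS.1 v hv (v+1) hv1 ((adj_iff (by omega) _ _).2 (Or.inr rfl))

lemma hI2 (i : Fin n) (a : ℕ) (h : of i a ∈ S) (h' : of i (a+1) ∈ S) : False := by
  refine hI_of hn hS (of i a) h ?_
  rw [of_succ]; exact h'

lemma hD_of : ∀ v : Fin n, v ∈ S ∨ v + 1 ∈ S ∨ v - 1 ∈ S :=
  (dom_iff (by omega) S).1 hS.2.1

lemma domR (i : Fin n) (a : ℕ) (h0 : of i a ∉ S) (h1 : of i (a+1) ∉ S) :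
    of i (a+2) ∈ S := by
  rcases hD_of hn hS (of i (a+1)) with h | h | h
  · exact absurd h h1
  · rw [of_succ] at h; exact h
  · rw [of_pred] at h; exact absurd h h0

lemma sec (i : Fin n) (a : ℕ) (hu : of i (a+1) ∉ S) :
    ∃ v ∈ S, (v = of i a ∨ v = of i (a+2)) ∧
      DomSet (SimpleGraph.cycleGraph n) (insert (of i (a+1)) (S.erase v)) := by
  obtain ⟨v, hv, hadj, hdom⟩ := hS.2.2 (of i (a+1)) hu
  refine ⟨v, hv, ?_, hdom⟩
  rcases (adj_iff (by omega) (of i (a+1)) v).1 hadj with h | h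
  · exact Or.inl ((eq_sub_of_add_eq h.symm).trans (of_pred i a))
  · right; rw [h, of_succ]

/-- 2-gap forward: s at 0, gap (1,2) ⇒ 3 ∈ S and 5 ∈ S. -/
lemma F1 (i : Fin n) (h1 : of i 1 ∉ S) (h2 : of i 2 ∉ S) :
    of i 3 ∈ S ∧ of i 5 ∈ S := by
  have h3 : of i 3 ∈ S := domR hn hS i 1 h1 h2
  have h4 : of i 4 ∉ S := fun h => hI2 hn hS i 3 h3 h
  obtain ⟨v, hv, hva, hdom⟩ := sec hn hS i 1 h2
  rcases hva with rfl | rfl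
  · exact absurd hv h1
  refine ⟨h3, ?_⟩
  have hd := (dom_iff (by omega) _).1 hdom (of i 4)
  rw [of_succ, show of i 4 - 1 = of i 3 from of_pred i 3, memT, memT, memT] at hd
  rcases hd with (h | ⟨-, h⟩) | (h | ⟨-, h⟩) | (h | ⟨h, -⟩)
  · exact absurd h (of_ne hn i (by omega) (by omega) (by omega))
  · exact absurd h h4
  · exact absurd h (of_ne hn i (by omega) (by omega) (by omega))
  · exact h
  · exact absurd h (of_ne hn i (by omega) (by omega) (by omega))
  · exact absurd rfl h

/-- 2-gap backward: s at 2, gap (3,4) ⇒ 0 ∈ S. -/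
lemma F1b (i : Fin n) (h2 : of i 2 ∈ S) (h3 : of i 3 ∉ S) (h4 : of i 4 ∉ S) :
    i ∈ S := by
  have h1 : of i 1 ∉ S := fun h => hI2 hn hS i 1 h h2
  obtain ⟨v, hv, hva, hdom⟩ := sec hn hS i 2 h3
  rcases hva with rfl | rfl
  swap
  · exact absurd hv h4
  have hd := (dom_iff (by omega) _).1 hdom (of i 1)
  rw [of_succ, show of i 1 - 1 = of i 0 from of_pred i 0, memT, memT, memT] at hd
  rcases hd with (h | ⟨-, h⟩) | (h | ⟨h, -⟩) | (h | ⟨-, h⟩)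
  · exact absurd h (of_ne hn i (by omega) (by omega) (by omega))
  · exact absurd h h1
  · exact absurd h (of_ne hn i (by omega) (by omega) (by omega))
  · exact absurd rfl h
  · exact absurd h (of_ne hn i (by omega) (by omega) (by omega))
  · rw [← of_zero i]; exact h

/-- 1-gap: s at 2, gap 3, s at 4 ⇒ 0 ∈ S or 6 ∈ S. -/
lemma F3 (i : Fin n) (h2 : of i 2 ∈ S) (h3 : of i 3 ∉ S) (h4 : of i 4 ∈ S) :
    i ∈ S ∨ of i 6 ∈ S := by
  have h1 : of i 1 ∉ S := fun h => hI2 hn hS i 1 h h2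
  have h5 : of i 5 ∉ S := fun h => hI2 hn hS i 4 h4 h
  obtain ⟨v, hv, hva, hdom⟩ := sec hn hS i 2 h3
  rcases hva with rfl | rfl
  · left
    have hd := (dom_iff (by omega) _).1 hdom (of i 1)
    rw [of_succ, show of i 1 - 1 = of i 0 from of_pred i 0, memT, memT, memT] at hd
    rcases hd with (h | ⟨-, h⟩) | (h | ⟨h, -⟩) | (h | ⟨-, h⟩)
    · exact absurd h (of_ne hn i (by omega) (by omega) (by omega))
    · exact absurd h h1
    · exact absurd h (of_ne hn i (by omega) (by omega) (by omega))
    · exact absurd rfl h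
    · exact absurd h (of_ne hn i (by omega) (by omega) (by omega))
    · rw [← of_zero i]; exact h
  · right
    have hd := (dom_iff (by omega) _).1 hdom (of i 5)
    rw [of_succ, show of i 5 - 1 = of i 4 from of_pred i 4, memT, memT, memT] at hd
    rcases hd with (h | ⟨-, h⟩) | (h | ⟨-, h⟩) | (h | ⟨h, -⟩)
    · exact absurd h (of_ne hn i (by omega) (by omega) (by omega))
    · exact absurd h h5
    · exact absurd h (of_ne hn i (by omega) (by omega) (by omega))
    · exact h
    · exact absurd h (of_ne hn i (by omega) (by omega) (by omega))
    · exact absurd rfl h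

end Facts

lemma of_of (i : Fin n) (a b : ℕ) : of (of i a) b = of i (a + b) := by
  unfold of; push_cast; ring

section Win

variable {S : Finset (Fin n)} (hn : 7 ≤ n) (hS : InSDS (SimpleGraph.cycleGraph n) S)

include hn hS

lemma window (i : Fin n) : ∃ a b c : ℕ, a < 7 ∧ b < 7 ∧ c < 7 ∧ a ≠ b ∧ a ≠ c ∧ b ≠ c ∧
    of i a ∈ S ∧ of i b ∈ S ∧ of i c ∈ S := by
  have hz : of i 0 ∈ S ↔ i ∈ S := by rw [of_zero]
  by_cases s2 : of i 2 ∈ S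
  · by_cases s4 : of i 4 ∈ S
    · have s3 : of i 3 ∉ S := fun h => hI2 hn hS i 2 s2 h
      rcases F3 hn hS i s2 s3 s4 with h | h
      · exact ⟨0, 2, 4, by omega, by omega, by omega, by omega, by omega, by omega,
          hz.2 h, s2, s4⟩
      · exact ⟨2, 4, 6, by omega, by omega, by omega, by omega, by omega, by omega, s2, s4, h⟩
    · have s3 : of i 3 ∉ S := fun h => hI2 hn hS i 2 s2 h
      have s0 : i ∈ S := F1b hn hS i s2 s3 s4
      have s5 : of i 5 ∈ S := domR hn hS i 3 s3 s4
      exact ⟨0, 2, 5, by omega, by omega, by omega, by omega, by omega, by omega,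
        hz.2 s0, s2, s5⟩
  · by_cases s3 : of i 3 ∈ S
    · by_cases s1 : of i 1 ∈ S
      · rcases hD_of hn hS (of i 5) with h | h | h
        · exact ⟨1, 3, 5, by omega, by omega, by omega, by omega, by omega, by omega,
            s1, s3, h⟩
        · rw [of_succ] at h
          exact ⟨1, 3, 6, by omega, by omega, by omega, by omega, by omega, by omega,
            s1, s3, h⟩
        · rw [show of i 5 - 1 = of i 4 from of_pred i 4] at h
          exact ⟨1, 3, 4, by omega, by omega, by omega, by omega, by omega, by omega,
            s1, s3, h⟩
      · have s0 : i ∈ S := by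
          rcases hD_of hn hS (of i 1) with h | h | h
          · exact absurd h s1
          · rw [of_succ] at h; exact absurd h s2
          · rw [show of i 1 - 1 = of i 0 from of_pred i 0, of_zero] at h; exact h
        have h5 := (F1 hn hS i s1 s2).2
        exact ⟨0, 3, 5, by omega, by omega, by omega, by omega, by omega, by omega,
          hz.2 s0, s3, h5⟩
    · have s4 : of i 4 ∈ S := domR hn hS i 2 s2 s3
      by_cases s1 : of i 1 ∈ S
      · have h6 := (F1 hn hS (of i 1) (by rw [of_of]; exact s2) (by rw [of_of]; exact s3)).2
        rw [of_of] at h6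
        exact ⟨1, 4, 6, by omega, by omega, by omega, by omega, by omega, by omega,
          s1, s4, h6⟩
      · exact absurd (F1 hn hS i s1 s2).1 s3

lemma window_card (i : Fin n) : 3 ≤ (((Finset.range 7).image (of i)) ∩ S).card := by
  obtain ⟨a, b, c, ha, hb, hc, hab, hac, hbc, hma, hmb, hmc⟩ := window hn hS i
  have hsub : ({of i a, of i b, of i c} : Finset (Fin n)) ⊆ ((Finset.range 7).image (of i)) ∩ S := by
    intro z hz
    simp only [Finset.mem_insert, Finset.mem_singleton] at hz
    rw [Finset.mem_inter, Finset.mem_image]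
    rcases hz with rfl | rfl | rfl
    · exact ⟨⟨a, Finset.mem_range.2 ha, rfl⟩, hma⟩
    · exact ⟨⟨b, Finset.mem_range.2 hb, rfl⟩, hmb⟩
    · exact ⟨⟨c, Finset.mem_range.2 hc, rfl⟩, hmc⟩
  have hcard : ({of i a, of i b, of i c} : Finset (Fin n)).card = 3 := by
    rw [Finset.card_insert_of_notMem, Finset.card_insert_of_notMem, Finset.card_singleton]
    · simp only [Finset.mem_singleton]
      exact of_ne hn i hb hc hbc
    · simp only [Finset.mem_insert, Finset.mem_singleton]
      push_neg
      exact ⟨of_ne hn i ha hb hab, of_ne hn i ha hc hac⟩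
  calc 3 = ({of i a, of i b, of i c} : Finset (Fin n)).card := hcard.symm
    _ ≤ _ := Finset.card_le_card hsub

end Win

lemma count (hn : 7 ≤ n) (S : Finset (Fin n)) :
    ∑ i : Fin n, (((Finset.range 7).image (of i)) ∩ S).card = 7 * S.card := by
  have h1 : ∀ i : Fin n, (((Finset.range 7).image (of i)) ∩ S).card
      = ∑ s ∈ S, if s ∈ (Finset.range 7).image (of i) then 1 else 0 := by
    intro i
    rw [Finset.inter_comm, ← Finset.filter_mem_eq_inter, Finset.card_filter]
  simp only [h1]
  rw [Finset.sum_comm]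
  have h2 : ∀ s : Fin n, (∑ i : Fin n, if s ∈ (Finset.range 7).image (of i) then 1 else 0) = 7 := by
    intro s
    rw [← Finset.card_filter]
    have he : Finset.univ.filter (fun i => s ∈ (Finset.range 7).image (of i))
        = (Finset.range 7).image (fun a : ℕ => s - (a : Fin n)) := by
      ext i
      simp only [Finset.mem_filter, Finset.mem_univ, true_and, Finset.mem_image,
        Finset.mem_range, of]
      constructor
      · rintro ⟨a, ha, rfl⟩
        exact ⟨a, ha, by ring⟩
      · rintro ⟨a, ha, rfl⟩
        exact ⟨a, ha, by ring⟩
    rw [he, Finset.card_image_of_injOn, Finset.card_range]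
    intro a ha b hb hab
    simp only [Finset.coe_range, Set.mem_Iio] at ha hb
    have heq : (a : Fin n) = (b : Fin n) := by
      have h' : s - (a : Fin n) = s - (b : Fin n) := hab
      have := congrArg (fun x => s - x) h'
      simpa using this
    have hv := congrArg Fin.val heq
    rwa [Fin.val_cast_of_lt (by omega), Fin.val_cast_of_lt (by omega)] at hv
  rw [Finset.sum_congr rfl (fun s _ => h2 s), Finset.sum_const, smul_eq_mul, mul_comm]

lemma lower {S : Finset (Fin n)} (hn : 7 ≤ n) (hS : InSDS (SimpleGraph.cycleGraph n) S) :
    3 * n ≤ 7 * S.card := by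
  calc 3 * n = ∑ _i : Fin n, 3 := by
        rw [Finset.sum_const, Finset.card_univ, Fintype.card_fin, smul_eq_mul, mul_comm]
    _ ≤ ∑ i : Fin n, (((Finset.range 7).image (of i)) ∩ S).card :=
        Finset.sum_le_sum (fun i _ => window_card hn hS i)
    _ = 7 * S.card := count hn S


section Construct

def patP (m x : ℕ) : Prop :=
  (x < 7*m ∧ (x % 7 = 0 ∨ x % 7 = 3 ∨ x % 7 = 5)) ∨ (7*m ≤ x ∧ (x - 7*m) % 2 = 0)

instance (m : ℕ) : DecidablePred (patP m) := fun x => by unfold patP; infer_instance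

def CS (n m : ℕ) [NeZero n] : Finset (Fin n) := Finset.univ.filter (fun v => patP m v.val)

lemma mem_CS {m : ℕ} {v : Fin n} : v ∈ CS n m ↔ patP m v.val := by
  simp [CS]

lemma pat0 (m : ℕ) : patP m 0 := by unfold patP; omega

lemma pat_ind {m y : ℕ} (h : patP m y) : ¬ patP m (y+1) := by unfold patP at *; omega

lemma pat_last {m t : ℕ} (hmt : n = 7*m+2*t) (hn4 : 4 ≤ n) : ¬ patP m (n-1) := by
  unfold patP at *; omega

lemma pat_pen {m t : ℕ} (hmt : n = 7*m+2*t) (hn4 : 4 ≤ n) : patP m (n-2) := by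
  unfold patP at *
  rcases Nat.eq_zero_or_pos t with rfl | ht
  · omega
  · omega

lemma dom3 {m y : ℕ} (h1 : 1 ≤ y) : patP m y ∨ patP m (y+1) ∨ patP m (y-1) := by
  unfold patP at *; omega

lemma addval (hn : 2 ≤ n) (v : Fin n) :
    ((v+1).val = v.val + 1 ∧ v.val + 1 < n) ∨ ((v+1).val = 0 ∧ v.val + 1 = n) := by
  have h : (v + 1).val = (v.val + 1) % n := by
    rw [Fin.add_def, val1 hn]
  have hv := v.isLt
  rcases eq_or_ne (v.val + 1) n with he | he
  · refine Or.inr ⟨?_, he⟩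
    rw [h, he, Nat.mod_self]
  · refine Or.inl ⟨?_, by omega⟩
    rw [h, Nat.mod_eq_of_lt (by omega)]

lemma subval (hn : 2 ≤ n) (v : Fin n) :
    ((v-1).val = v.val - 1 ∧ v.val ≠ 0) ∨ ((v-1).val = n - 1 ∧ v.val = 0) := by
  have h : (v - 1).val = (n - 1 + v.val) % n := by
    rw [Fin.sub_def, val1 hn]
  have hv := v.isLt
  rcases eq_or_ne v.val 0 with he | he
  · refine Or.inr ⟨?_, he⟩
    rw [h, he, Nat.add_zero, Nat.mod_eq_of_lt (by omega)]
  · refine Or.inl ⟨?_, he⟩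
    rw [h, show n - 1 + v.val = n + (v.val - 1) by omega, Nat.add_mod_left,
      Nat.mod_eq_of_lt (by omega)]

lemma construct (m t : ℕ) (hmt : n = 7*m + 2*t) (hn4 : 4 ≤ n) :
    InSDS (SimpleGraph.cycleGraph n) (CS n m) := by
  have hn3 : 3 ≤ n := by omega
  have hn2 : 2 ≤ n := by omega
  refine ⟨?_, ?_, ?_⟩
  · -- independent
    intro a ha b hb hadj
    rw [mem_CS] at ha hb
    have hav := a.isLt
    have hbv := b.isLt
    rcases (adj_iff hn3 a b).1 hadj with h | h
    · rcases addval hn2 b with ⟨h1, h2⟩ | ⟨h1, h2⟩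
      · have hab : a.val = b.val + 1 := by rw [h]; exact h1
        exact pat_ind hb (by rwa [← hab])
      · have hab : a.val = 0 := by rw [h]; exact h1
        exact pat_last hmt hn4 (by rw [show n-1 = b.val by omega]; exact hb)
    · rcases addval hn2 a with ⟨h1, h2⟩ | ⟨h1, h2⟩
      · have hab : b.val = a.val + 1 := by rw [h]; exact h1
        exact pat_ind ha (by rwa [← hab])
      · have hab : b.val = 0 := by rw [h]; exact h1
        exact pat_last hmt hn4 (by rw [show n-1 = a.val by omega]; exact ha)
  · -- dominating
    rw [dom_iff hn3]
    intro v
    rw [mem_CS, mem_CS, mem_CS]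
    have hv := v.isLt
    rcases eq_or_ne v.val 0 with he | hne0
    · exact Or.inl (by rw [he]; exact pat0 m)
    rcases eq_or_ne v.val (n-1) with he | hneN
    · refine Or.inr (Or.inl ?_)
      rcases addval hn2 v with ⟨h1, h2⟩ | ⟨h1, h2⟩
      · omega
      · rw [h1]; exact pat0 m
    have hi1 : (v+1).val = v.val + 1 := by
      rcases addval hn2 v with ⟨h1, h2⟩ | ⟨h1, h2⟩
      · exact h1
      · omega
    have hi2 : (v-1).val = v.val - 1 := by
      rcases subval hn2 v with ⟨h1, h2⟩ | ⟨h1, h2⟩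
      · exact h1
      · omega
    rcases dom3 (m := m) (y := v.val) (by omega) with h | h | h
    · exact Or.inl h
    · exact Or.inr (Or.inl (by rwa [hi1]))
    · exact Or.inr (Or.inr (by rwa [hi2]))
  · -- secure
    intro u hu
    rw [mem_CS] at hu
    have hx := u.isLt
    have hx0 : u.val ≠ 0 := fun h => hu (by rw [h]; exact pat0 m)
    by_cases hc : u.val < 7*m ∧ (u.val % 7 = 2 ∨ u.val % 7 = 4)
    · -- v = u + 1
      have hv1 : (u+1).val = u.val + 1 := by
        rcases addval hn2 u with ⟨h, -⟩ | ⟨-, h⟩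
        · exact h
        · exfalso; unfold patP at hu; omega
      refine ⟨u+1, ?_, (adj_iff hn3 u (u+1)).2 (Or.inr rfl), ?_⟩
      · rw [mem_CS, hv1]
        unfold patP at hu ⊢
        omega
      · rw [dom_iff hn3]
        intro w
        rw [memT, memT, memT]
        simp only [mem_CS, ← Fin.val_inj]
        have hw := w.isLt
        rcases eq_or_ne w.val u.val with he | hne1
        · exact Or.inl (Or.inl he)
        rcases eq_or_ne w.val (u.val+1) with he | hne2
        · refine Or.inr (Or.inr (Or.inl ?_))
          rcases subval hn2 w with ⟨h, -⟩ | ⟨-, h0⟩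
          · omega
          · omega
        rcases eq_or_ne w.val (u.val+2) with he | hne3
        · refine Or.inr (Or.inl (Or.inr ?_))
          rcases addval hn2 w with ⟨h, -⟩ | ⟨h, hn'⟩
          · refine ⟨by omega, ?_⟩
            rw [h, he]
            unfold patP at hu ⊢
            omega
          · refine ⟨by omega, by rw [h]; exact pat0 m⟩
        rcases eq_or_ne w.val 0 with he | hne4
        · exact Or.inl (Or.inr ⟨by omega, by rw [he]; exact pat0 m⟩)
        rcases eq_or_ne w.val (n-1) with he | hne5
        · have h : (w+1).val = 0 := by
            rcases addval hn2 w with ⟨-, hlt⟩ | ⟨h, -⟩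
            · omega
            · exact h
          exact Or.inr (Or.inl (Or.inr ⟨by omega, by rw [h]; exact pat0 m⟩))
        have hi1 : (w+1).val = w.val + 1 := by
          rcases addval hn2 w with ⟨h, -⟩ | ⟨-, h⟩
          · exact h
          · omega
        have hi2 : (w-1).val = w.val - 1 := by
          rcases subval hn2 w with ⟨h, -⟩ | ⟨-, h⟩
          · exact h
          · omega
        rcases dom3 (m := m) (y := w.val) (by omega) with h | h | h
        · exact Or.inl (Or.inr ⟨by omega, h⟩)
        · exact Or.inr (Or.inl (Or.inr ⟨by omega, by rwa [hi1]⟩))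
        · exact Or.inr (Or.inr (Or.inr ⟨by omega, by rwa [hi2]⟩))
    · -- v = u - 1
      have hv1 : (u-1).val = u.val - 1 := by
        rcases subval hn2 u with ⟨h, -⟩ | ⟨-, h⟩
        · exact h
        · exact absurd h hx0
      refine ⟨u-1, ?_, (adj_iff hn3 u (u-1)).2 (Or.inl (by ring)), ?_⟩
      · rw [mem_CS, hv1]
        unfold patP at hu ⊢
        omega
      · rw [dom_iff hn3]
        intro w
        rw [memT, memT, memT]
        simp only [mem_CS, ← Fin.val_inj]
        have hw := w.isLt
        rcases eq_or_ne w.val u.val with he | hne1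
        · exact Or.inl (Or.inl he)
        rcases eq_or_ne w.val (u.val-1) with he | hne2
        · -- w = v : use w+1 = u
          refine Or.inr (Or.inl (Or.inl ?_))
          rcases addval hn2 w with ⟨h, -⟩ | ⟨-, h0⟩
          · omega
          · omega
        by_cases he : 2 ≤ u.val ∧ w.val = u.val - 2
        · -- use w-1 = u.val - 3
          have hx2 : u.val ≠ 2 := by
            intro h2
            rw [h2] at hu hc
            unfold patP at hu
            omega
          refine Or.inr (Or.inr (Or.inr ?_))
          rcases subval hn2 w with ⟨h, -⟩ | ⟨-, h0⟩
          · refine ⟨by omega, ?_⟩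
            rw [h]
            unfold patP at hu hc ⊢
            omega
          · omega
        by_cases he2 : u.val = 1 ∧ w.val = n-1
        · -- use w-1 = n-2
          refine Or.inr (Or.inr (Or.inr ?_))
          rcases subval hn2 w with ⟨h, -⟩ | ⟨-, h0⟩
          · refine ⟨by omega, ?_⟩
            rw [h, show w.val - 1 = n-2 by omega]
            exact pat_pen hmt hn4
          · omega
        rcases eq_or_ne w.val 0 with heq | hne4
        · exact Or.inl (Or.inr ⟨by omega, by rw [heq]; exact pat0 m⟩)
        rcases eq_or_ne w.val (n-1) with heq | hne5
        · have h : (w+1).val = 0 := by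
            rcases addval hn2 w with ⟨-, hlt⟩ | ⟨h, -⟩
            · omega
            · exact h
          exact Or.inr (Or.inl (Or.inr ⟨by omega, by rw [h]; exact pat0 m⟩))
        have hi1 : (w+1).val = w.val + 1 := by
          rcases addval hn2 w with ⟨h, -⟩ | ⟨-, h⟩
          · exact h
          · omega
        have hi2 : (w-1).val = w.val - 1 := by
          rcases subval hn2 w with ⟨h, -⟩ | ⟨-, h⟩
          · exact h
          · omega
        rcases dom3 (m := m) (y := w.val) (by omega) with h | h | h
        · exact Or.inl (Or.inr ⟨by omega, h⟩)
        · exact Or.inr (Or.inl (Or.inr ⟨by omega, by rwa [hi1]⟩))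
        · exact Or.inr (Or.inr (Or.inr ⟨by omega, by rwa [hi2]⟩))


lemma block_sum (m : ℕ) (j : ℕ) (hj : j ≤ m) :
    (∑ x ∈ Finset.range (7*j), if patP m x then 1 else 0) = 3*j := by
  induction j with
  | zero => simp
  | succ j ih =>
    have hj' : j ≤ m := by omega
    have e : 7*(j+1) = (7*j+6)+1 := by ring
    have p0 : patP m (7*j) := by unfold patP; omega
    have p1 : ¬ patP m (7*j+1) := by unfold patP; omega
    have p2 : ¬ patP m (7*j+2) := by unfold patP; omega
    have p3 : patP m (7*j+3) := by unfold patP; omega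
    have p4 : ¬ patP m (7*j+4) := by unfold patP; omega
    have p5 : patP m (7*j+5) := by unfold patP; omega
    have p6 : ¬ patP m (7*j+6) := by unfold patP; omega
    rw [e, Finset.sum_range_succ, show 7*j+6 = (7*j+5)+1 by ring, Finset.sum_range_succ,
      show 7*j+5 = (7*j+4)+1 by ring, Finset.sum_range_succ,
      show 7*j+4 = (7*j+3)+1 by ring, Finset.sum_range_succ,
      show 7*j+3 = (7*j+2)+1 by ring, Finset.sum_range_succ,
      show 7*j+2 = (7*j+1)+1 by ring, Finset.sum_range_succ,
      show 7*j+1 = (7*j)+1 by ring, Finset.sum_range_succ, ih hj',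
      if_pos p0, if_neg p1, if_neg p2, if_pos p3, if_neg p4, if_pos p5, if_neg p6]
    ring

lemma tail_sum (m : ℕ) (j : ℕ) :
    (∑ x ∈ Finset.range (7*m+2*j), if patP m x then 1 else 0) = 3*m + j := by
  induction j with
  | zero =>
    rw [show 7*m+2*0 = 7*m by ring, block_sum m m le_rfl]
    ring
  | succ j ih =>
    have q0 : patP m (7*m+2*j) := by unfold patP; omega
    have q1 : ¬ patP m (7*m+2*j+1) := by unfold patP; omega
    rw [show 7*m+2*(j+1) = (7*m+2*j+1)+1 by ring, Finset.sum_range_succ,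
      show 7*m+2*j+1 = (7*m+2*j)+1 by ring, Finset.sum_range_succ, ih,
      if_pos q0, if_neg q1]
    ring

lemma card_CS' (N m t : ℕ) [NeZero N] (hmt : N = 7*m + 2*t) :
    (CS N m).card = 3*m + t := by
  rw [CS, Finset.card_filter]
  rw [Fin.sum_univ_eq_sum_range (fun x => if patP m x then 1 else 0) N, hmt, tail_sum]
lemma card_CS_unused (n m t : ℕ) [NeZero n] (hmt : n = 7*m + 2*t) : (CS n m).card = 3*m + t := by
  rw [CS, Finset.card_filter]
  rw [Fin.sum_univ_eq_sum_range (fun x => if patP m x then 1 else 0) n, hmt, tail_sum]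


end Construct

end CycAux

theorem stmt8' (n : ℕ) (hn : 4 ≤ n) (hn5 : n ≠ 5) :
    gammaIS (SimpleGraph.cycleGraph n) = (3 * n + 6) / 7 := by
  haveI : NeZero n := ⟨by omega⟩
  obtain ⟨m, t, hmt, hcard⟩ : ∃ m t, n = 7*m+2*t ∧ 3*m+t = (3*n+6)/7 :=
    ⟨n - 2*((3*n+6)/7), (3*n+6)/7 - 3*(n - 2*((3*n+6)/7)), by omega, by omega⟩
  have hcons := CycAux.construct m t hmt hn
  have hcc : (CycAux.CS n m).card = (3*n+6)/7 := by
    rw [CycAux.card_CS' n m t hmt]; omega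
  apply le_antisymm
  · exact Nat.sInf_le ⟨CycAux.CS n m, hcons, hcc⟩
  · apply le_csInf
    · exact ⟨(3*n+6)/7, CycAux.CS n m, hcons, hcc⟩
    rintro b ⟨S, hS, rfl⟩
    by_cases h7 : 7 ≤ n
    · have := CycAux.lower h7 hS
      omega
    · rcases (by omega : n = 4 ∨ n = 6) with rfl | rfl
      · have h4 : ∀ S : Finset (Fin 4), InSDS (SimpleGraph.cycleGraph 4) S → 2 ≤ S.card := by
          decide
        have := h4 S hS
        omega
      · have h6 : ∀ S : Finset (Fin 6), InSDS (SimpleGraph.cycleGraph 6) S → 3 ≤ S.card := by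
          decide
        have := h6 S hS
        omega

theorem stmt8 (n : ℕ) (hn : 4 ≤ n) (hn5 : n ≠ 5) :
    gammaIS (SimpleGraph.cycleGraph n) = (3 * n + 6) / 7 := stmt8' n hn hn5
end

section
/- Let G be a non-complete graph admitting an independent secure dominating set. Then the join K_1 + G (adding one new vertex adjacent to all vertices of G) satisfies γ_is(K_1 + G) = γ_is(G). -/
variable {V : Type*} [Fintype V] [DecidableEq V]

/-- The join `K₁ + G`: a new vertex `none` adjacent to every vertex of `G`. -/
def joinOne (G : SimpleGraph V) : SimpleGraph (Option V) :=
  SimpleGraph.fromRel (fun x y =>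
    (x = none ∧ y ≠ none) ∨ (∃ a b, x = some a ∧ y = some b ∧ G.Adj a b))

section Aux

variable {G : SimpleGraph V}

lemma joinOne_adj_some_some {a b : V} :
    (joinOne G).Adj (some a) (some b) ↔ G.Adj a b := by
  constructor
  · rintro ⟨hne, (⟨h1, _⟩ | ⟨x, y, hx, hy, hadj⟩) | (⟨h1, _⟩ | ⟨x, y, hx, hy, hadj⟩)⟩
    · simp at h1
    · cases hx; cases hy; exact hadj
    · simp at h1
    · cases hx; cases hy; exact hadj.symm
  · intro h
    exact ⟨by simpa using h.ne, Or.inl (Or.inr ⟨a, b, rfl, rfl, h⟩)⟩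

lemma joinOne_adj_none_some (a : V) : (joinOne G).Adj none (some a) :=
  ⟨by simp, Or.inl (Or.inl ⟨rfl, by simp⟩)⟩

lemma domSet_image {S : Finset V} (hne : S.Nonempty) (h : DomSet G S) :
    DomSet (joinOne G) (S.image some) := by
  intro v
  match v with
  | none =>
    obtain ⟨w, hw⟩ := hne
    exact Or.inr ⟨some w, Finset.mem_image_of_mem _ hw, (joinOne_adj_none_some w).symm⟩
  | some a =>
    rcases h a with ha | ⟨u, hu, hadj⟩
    · exact Or.inl (Finset.mem_image_of_mem _ ha)
    · exact Or.inr ⟨some u, Finset.mem_image_of_mem _ hu,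
        joinOne_adj_some_some.mpr hadj⟩

lemma domSet_of_image {S : Finset V} (h : DomSet (joinOne G) (S.image some)) :
    DomSet G S := by
  intro v
  rcases h (some v) with hv | ⟨u, hu, hadj⟩
  · exact Or.inl (by simpa using hv)
  · obtain ⟨w, hw, rfl⟩ := Finset.mem_image.mp hu
    exact Or.inr ⟨w, hw, joinOne_adj_some_some.mp hadj⟩

lemma insds_image {S : Finset V} (hne : S.Nonempty) (hS : InSDS G S) :
    InSDS (joinOne G) (S.image some) := by
  obtain ⟨hind, hdom, hsec⟩ := hS
  refine ⟨?_, domSet_image hne hdom, ?_⟩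
  · rintro a ha b hb
    obtain ⟨a', ha', rfl⟩ := Finset.mem_image.mp ha
    obtain ⟨b', hb', rfl⟩ := Finset.mem_image.mp hb
    rw [joinOne_adj_some_some]
    exact hind a' ha' b' hb'
  · intro u hu
    match u with
    | none =>
      obtain ⟨w, hw⟩ := hne
      refine ⟨some w, Finset.mem_image_of_mem _ hw, joinOne_adj_none_some w, ?_⟩
      intro x
      match x with
      | none => exact Or.inl (Finset.mem_insert_self _ _)
      | some a =>
        exact Or.inr ⟨none, Finset.mem_insert_self _ _, joinOne_adj_none_some a⟩
    | some a =>
      have ha : a ∉ S := fun h => hu (Finset.mem_image_of_mem _ h)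
      obtain ⟨v, hv, hadj, hdom'⟩ := hsec a ha
      refine ⟨some v, Finset.mem_image_of_mem _ hv, joinOne_adj_some_some.mpr hadj, ?_⟩
      have heq : insert (some a) ((S.image some).erase (some v))
          = (insert a (S.erase v)).image some := by
        rw [Finset.image_insert, Finset.image_erase (Option.some_injective V)]
      rw [heq]
      exact domSet_image (Finset.insert_nonempty _ _) hdom'

end Aux

theorem stmt9 (G : SimpleGraph V) (hnc : ∃ a b : V, a ≠ b ∧ ¬ G.Adj a b)
    (hex : ∃ S : Finset V, InSDS G S) :
    gammaIS (joinOne G) = gammaIS G := by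
  obtain ⟨a0, b0, hab, hnadj⟩ := hnc
  -- any dominating set of G is nonempty
  have dom_ne : ∀ S : Finset V, DomSet G S → S.Nonempty := by
    intro S hS
    rcases hS a0 with h | ⟨u, hu, _⟩
    · exact ⟨a0, h⟩
    · exact ⟨u, hu⟩
  have hAne : {k | ∃ S : Finset V, InSDS G S ∧ S.card = k}.Nonempty := by
    obtain ⟨S, hS⟩ := hex
    exact ⟨S.card, S, hS, rfl⟩
  have hBne : {k | ∃ T : Finset (Option V), InSDS (joinOne G) T ∧ T.card = k}.Nonempty := by
    obtain ⟨S, hS⟩ := hex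
    exact ⟨(S.image some).card, S.image some,
      insds_image (dom_ne S hS.2.1) hS, rfl⟩
  unfold gammaIS
  apply le_antisymm
  · -- γ(join) ≤ γ(G)
    obtain ⟨S, hS, hcard⟩ := Nat.sInf_mem hAne
    apply Nat.sInf_le
    refine ⟨S.image some, insds_image (dom_ne S hS.2.1) hS, ?_⟩
    rw [Finset.card_image_of_injective _ (Option.some_injective V), hcard]
  · -- γ(G) ≤ γ(join)
    obtain ⟨T, hT, hcard⟩ := Nat.sInf_mem hBne
    obtain ⟨hind, hdom, hsec⟩ := hT
    -- none ∉ T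
    have hnone : none ∉ T := by
      intro hmem
      have hsome : ∀ x : V, some x ∉ T := by
        intro x hx
        exact hind none hmem (some x) hx (joinOne_adj_none_some x)
      obtain ⟨v, hv, _, hdom'⟩ := hsec (some a0) (hsome a0)
      have hvnone : v = none := by
        match v with
        | none => rfl
        | some x => exact absurd hv (hsome x)
      subst hvnone
      rcases hdom' (some b0) with hb | ⟨u, hu, hadj⟩
      · rcases Finset.mem_insert.mp hb with h | h
        · exact hab (by simpa using h.symm)
        · exact hsome b0 (Finset.mem_of_mem_erase h)
      · rcases Finset.mem_insert.mp hu with h | h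
        · subst h
          exact hnadj (joinOne_adj_some_some.mp hadj)
        · have := Finset.mem_of_mem_erase h
          match u, this with
          | none, h' => exact (Finset.notMem_erase _ _) h
          | some x, h' => exact hsome x h'
    -- S := preimage
    set S : Finset V := T.preimage some (Option.some_injective V).injOn with hSdef
    have himg : S.image some = T := by
      ext x
      match x with
      | none => simp [hSdef, hnone]
      | some a => simp [hSdef, Finset.mem_preimage]
    have hmemS : ∀ a : V, a ∈ S ↔ some a ∈ T := by
      intro a; simp [hSdef, Finset.mem_preimage]
    apply Nat.sInf_le
    refine ⟨S, ⟨?_, ?_, ?_⟩, ?_⟩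
    · intro a ha b hb hadj
      exact hind (some a) ((hmemS a).mp ha) (some b) ((hmemS b).mp hb)
        (joinOne_adj_some_some.mpr hadj)
    · exact domSet_of_image (himg ▸ hdom)
    · intro u hu
      obtain ⟨v, hv, hadj, hdom'⟩ := hsec (some u) (fun h => hu ((hmemS u).mpr h))
      have hvsome : ∃ w, v = some w := by
        match v with
        | none => exact absurd hv hnone
        | some w => exact ⟨w, rfl⟩
      obtain ⟨w, rfl⟩ := hvsome
      refine ⟨w, (hmemS w).mpr hv, joinOne_adj_some_some.mp hadj, ?_⟩
      apply domSet_of_image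
      have heq : (insert u (S.erase w)).image some
          = insert (some u) (T.erase (some w)) := by
        rw [Finset.image_insert, Finset.image_erase (Option.some_injective V), himg]
      rw [heq]
      exact hdom'
    · rw [← hcard, ← himg,
        Finset.card_image_of_injective _ (Option.some_injective V)]
end

section
/- Let G be a connected threshold graph with split partition (C, I) where C is a clique and I is an independent set. If there exists c₀ ∈ C with no neighbor in I, then I ∪ {c₀} is a minimum independent secure dominating set of G; otherwise, I itself is a minimum independent secure dominating set of G. -/
variable {V : Type*} [Fintype V] [DecidableEq V]

theorem stmt11 (G : SimpleGraph V) (C I : Finset V)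
    (hpart : ∀ v : V, v ∈ C ∨ v ∈ I) (hdisj : Disjoint C I)
    (hclique : ∀ a ∈ C, ∀ b ∈ C, a ≠ b → G.Adj a b)
    (hindep : ∀ a ∈ I, ∀ b ∈ I, ¬ G.Adj a b)
    (hC : ∀ x ∈ C, ∀ y ∈ C,
      (∀ z, (G.Adj x z ∨ z = x) → (G.Adj y z ∨ z = y)) ∨
      (∀ z, (G.Adj y z ∨ z = y) → (G.Adj x z ∨ z = x)))
    (hI : ∀ x ∈ I, ∀ y ∈ I,
      (∀ z, G.Adj x z → G.Adj y z) ∨ (∀ z, G.Adj y z → G.Adj x z))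
    (hconn : G.Connected) :
    (∀ c₀ ∈ C, (∀ i ∈ I, ¬ G.Adj c₀ i) →
      InSDS G (insert c₀ I) ∧ (insert c₀ I).card = gammaIS G) ∧
    ((∀ c ∈ C, ∃ i ∈ I, G.Adj c i) →
      InSDS G I ∧ I.card = gammaIS G) := by
  have hCI : ∀ x ∈ C, x ∉ I := fun x hx => Finset.disjoint_left.mp hdisj hx
  constructor
  · -- case 1
    intro c₀ hc₀ hno
    have hc₀I : c₀ ∉ I := hCI c₀ hc₀
    have hmem : InSDS G (insert c₀ I) := by
      refine ⟨?_, ?_, ?_⟩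
      · -- independent
        intro a ha b hb
        rcases Finset.mem_insert.mp ha with rfl | haI
        · rcases Finset.mem_insert.mp hb with rfl | hbI
          · exact G.irrefl
          · exact hno b hbI
        · rcases Finset.mem_insert.mp hb with rfl | hbI
          · exact fun h => hno a haI h.symm
          · exact hindep a haI b hbI
      · -- dominating
        intro v
        rcases hpart v with hvC | hvI
        · by_cases hv : v = c₀
          · exact Or.inl (Finset.mem_insert.mpr (Or.inl hv))
          · exact Or.inr ⟨c₀, Finset.mem_insert_self _ _,
              hclique c₀ hc₀ v hvC (fun h => hv h.symm)⟩
        · exact Or.inl (Finset.mem_insert_of_mem hvI)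
      · -- secure
        intro u hu
        have huI : u ∉ I := fun h => hu (Finset.mem_insert_of_mem h)
        have huC : u ∈ C := (hpart u).resolve_right huI
        have hune : u ≠ c₀ := fun h => hu (Finset.mem_insert.mpr (Or.inl h))
        refine ⟨c₀, Finset.mem_insert_self _ _, hclique u huC c₀ hc₀ hune, ?_⟩
        rw [Finset.erase_insert hc₀I]
        intro w
        rcases hpart w with hwC | hwI
        · by_cases hw : w = u
          · exact Or.inl (Finset.mem_insert.mpr (Or.inl hw))
          · exact Or.inr ⟨u, Finset.mem_insert_self _ _,
              hclique u huC w hwC (fun h => hw h.symm)⟩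
        · exact Or.inl (Finset.mem_insert_of_mem hwI)
    refine ⟨hmem, ?_⟩
    have hlb : ∀ S : Finset V, InSDS G S → I.card + 1 ≤ S.card := by
      intro S ⟨hind, hdom, hsec⟩
      have hSC : ∃ c ∈ S, c ∈ C := by
        by_contra hne
        push_neg at hne
        have hSI : ∀ x ∈ S, x ∈ I := fun x hx => (hpart x).resolve_left (hne x hx)
        rcases hdom c₀ with h | ⟨u, huS, hadj⟩
        · exact hc₀I (hSI c₀ h)
        · exact hno u (hSI u huS) hadj.symm
      obtain ⟨c, hcS, hcC⟩ := hSC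
      have huniq : ∀ x ∈ S, x ∈ C → x = c := by
        intro x hxS hxC
        by_contra hne
        exact hind x hxS c hcS (hclique x hxC c hcC hne)
      have hIsub : I ⊆ S := by
        intro i hiI
        by_contra hiS
        obtain ⟨v, hvS, hadj, hdom'⟩ := hsec i hiS
        have hvC : v ∈ C := (hpart v).resolve_right (fun hvI => hindep i hiI v hvI hadj)
        have hvc : v = c := huniq v hvS hvC
        subst hvc
        have hc₀notin : c₀ ∉ insert i (S.erase v) := by
          intro h
          rcases Finset.mem_insert.mp h with rfl | h'
          · exact hc₀I hiI
          · obtain ⟨hne, hc₀S⟩ := Finset.mem_erase.mp h'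
            exact hne (huniq c₀ hc₀S hc₀)
        rcases hdom' c₀ with h | ⟨u, huS', hadj'⟩
        · exact hc₀notin h
        · have huI : u ∈ I := by
            rcases Finset.mem_insert.mp huS' with rfl | h'
            · exact hiI
            · obtain ⟨hune, huS⟩ := Finset.mem_erase.mp h'
              rcases hpart u with huC | huI
              · exact absurd (huniq u huS huC) hune
              · exact huI
          exact hno u huI hadj'.symm
      have hsub : insert c I ⊆ S := Finset.insert_subset hcS hIsub
      calc I.card + 1 = (insert c I).card :=
            (Finset.card_insert_of_notMem (hCI c hcC)).symm
        _ ≤ S.card := Finset.card_le_card hsub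
    refine le_antisymm ?_ (Nat.sInf_le ⟨insert c₀ I, hmem, rfl⟩)
    refine le_csInf ⟨(insert c₀ I).card, insert c₀ I, hmem, rfl⟩ ?_
    rintro k ⟨S, hS, rfl⟩
    rw [Finset.card_insert_of_notMem hc₀I]
    exact hlb S hS
  · -- case 2
    intro hall
    have hmem : InSDS G I := by
      refine ⟨hindep, ?_, ?_⟩
      · intro v
        rcases hpart v with hvC | hvI
        · obtain ⟨i, hiI, hadj⟩ := hall v hvC
          exact Or.inr ⟨i, hiI, hadj.symm⟩
        · exact Or.inl hvI
      · intro u huI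
        have huC : u ∈ C := (hpart u).resolve_right huI
        obtain ⟨i, hiI, hadj⟩ := hall u huC
        refine ⟨i, hiI, hadj, ?_⟩
        intro w
        rcases hpart w with hwC | hwI
        · by_cases hw : w = u
          · exact Or.inl (Finset.mem_insert.mpr (Or.inl hw))
          · exact Or.inr ⟨u, Finset.mem_insert_self _ _,
              hclique u huC w hwC (fun h => hw h.symm)⟩
        · by_cases hw : w = i
          · exact Or.inr ⟨u, Finset.mem_insert_self _ _, hw ▸ hadj⟩
          · exact Or.inl (Finset.mem_insert_of_mem (Finset.mem_erase.mpr ⟨hw, hwI⟩))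
    refine ⟨hmem, ?_⟩
    have hlb : ∀ S : Finset V, InSDS G S → I.card ≤ S.card := by
      intro S ⟨hind, hdom, hsec⟩
      by_cases hIsub : I ⊆ S
      · exact Finset.card_le_card hIsub
      · obtain ⟨i, hiI, hiS⟩ := Finset.not_subset.mp hIsub
        have hSC : ∃ c ∈ S, c ∈ C := by
          by_contra hne
          push_neg at hne
          have hSI : ∀ x ∈ S, x ∈ I := fun x hx => (hpart x).resolve_left (hne x hx)
          rcases hdom i with h | ⟨u, huS, hadj⟩
          · exact hiS h
          · exact hindep u (hSI u huS) i hiI hadj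
        obtain ⟨c, hcS, hcC⟩ := hSC
        have huniq : ∀ x ∈ S, x ∈ C → x = c := by
          intro x hxS hxC
          by_contra hne
          exact hind x hxS c hcS (hclique x hxC c hcC hne)
        obtain ⟨v, hvS, hadj, hdom'⟩ := hsec i hiS
        have hvC : v ∈ C := (hpart v).resolve_right (fun hvI => hindep i hiI v hvI hadj)
        have hvc : v = c := huniq v hvS hvC
        subst hvc
        have hIS : I.erase i ⊆ S := by
          intro j hj
          obtain ⟨hji, hjI⟩ := Finset.mem_erase.mp hj
          by_contra hjS
          have hjnot : j ∉ insert i (S.erase v) := by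
            intro h
            rcases Finset.mem_insert.mp h with rfl | h'
            · exact hji rfl
            · exact hjS (Finset.mem_of_mem_erase h')
          rcases hdom' j with h | ⟨u, huS', hadj'⟩
          · exact hjnot h
          · rcases Finset.mem_insert.mp huS' with rfl | h'
            · exact hindep u hiI j hjI hadj'
            · obtain ⟨hune, huS⟩ := Finset.mem_erase.mp h'
              rcases hpart u with huC | huI
              · exact hune (huniq u huS huC)
              · exact hindep u huI j hjI hadj'
        have hsub : insert v (I.erase i) ⊆ S := Finset.insert_subset hvS hIS
        have h1 : (insert v (I.erase i)).card = (I.erase i).card + 1 :=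
          Finset.card_insert_of_notMem (fun h => hCI v hvC (Finset.mem_of_mem_erase h))
        have h2 : (I.erase i).card + 1 = I.card := Finset.card_erase_add_one hiI
        calc I.card = (insert v (I.erase i)).card := by rw [h1, h2]
          _ ≤ S.card := Finset.card_le_card hsub
    refine le_antisymm ?_ (Nat.sInf_le ⟨I, hmem, rfl⟩)
    refine le_csInf ⟨I.card, I, hmem, rfl⟩ ?_
    rintro k ⟨S, hS, rfl⟩
    exact hlb S hS
end

section
/- Let G=(V,E) be a graph with V = {v_1,...,v_n}, and construct G' by adding, for each i, new vertices a_i, b_i and edges (v_i, a_i), (a_i, b_i). Then G has an independent dominating set of size at most k if and only if G' has an independent secure dominating set of size at most n + k. -/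
variable {V : Type*} [Fintype V] [DecidableEq V]

/-- `G` with a pendant path `vᵢ – aᵢ – bᵢ` attached to each vertex `vᵢ`:
`aᵢ = Sum.inr (Sum.inl i)`, `bᵢ = Sum.inr (Sum.inr i)`. -/
def extPath2 (G : SimpleGraph V) : SimpleGraph (V ⊕ V ⊕ V) :=
  SimpleGraph.fromRel (fun x y =>
    (∃ a b, x = Sum.inl a ∧ y = Sum.inl b ∧ G.Adj a b) ∨
    (∃ a, x = Sum.inl a ∧ y = Sum.inr (Sum.inl a)) ∨
    (∃ a, x = Sum.inr (Sum.inl a) ∧ y = Sum.inr (Sum.inr a)))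

set_option linter.unusedSectionVars false in
open Sum in
theorem ext_adj_iff (G : SimpleGraph V) (x y : V ⊕ V ⊕ V) :
    (extPath2 G).Adj x y ↔
      ((∃ a b, x = inl a ∧ y = inl b ∧ G.Adj a b) ∨
       (∃ a, x = inl a ∧ y = inr (inl a)) ∨ (∃ a, x = inr (inl a) ∧ y = inl a) ∨
       (∃ a, x = inr (inl a) ∧ y = inr (inr a)) ∨ (∃ a, x = inr (inr a) ∧ y = inr (inl a))) := by
  simp only [extPath2, SimpleGraph.fromRel_adj]
  constructor
  · rintro ⟨hne, (⟨a,b,rfl,rfl,hab⟩|⟨a,rfl,rfl⟩|⟨a,rfl,rfl⟩)|(⟨a,b,rfl,rfl,hab⟩|⟨a,rfl,rfl⟩|⟨a,rfl,rfl⟩)⟩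
    · exact Or.inl ⟨a,b,rfl,rfl,hab⟩
    · exact Or.inr (Or.inl ⟨a,rfl,rfl⟩)
    · exact Or.inr (Or.inr (Or.inr (Or.inl ⟨a,rfl,rfl⟩)))
    · exact Or.inl ⟨b,a,rfl,rfl,hab.symm⟩
    · exact Or.inr (Or.inr (Or.inl ⟨a,rfl,rfl⟩))
    · exact Or.inr (Or.inr (Or.inr (Or.inr ⟨a,rfl,rfl⟩)))
  · rintro (⟨a,b,rfl,rfl,hab⟩|⟨a,rfl,rfl⟩|⟨a,rfl,rfl⟩|⟨a,rfl,rfl⟩|⟨a,rfl,rfl⟩)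
    · exact ⟨by simp [hab.ne], Or.inl (Or.inl ⟨a,b,rfl,rfl,hab⟩)⟩
    · exact ⟨by simp, Or.inl (Or.inr (Or.inl ⟨a,rfl,rfl⟩))⟩
    · exact ⟨by simp, Or.inr (Or.inr (Or.inl ⟨a,rfl,rfl⟩))⟩
    · exact ⟨by simp, Or.inl (Or.inr (Or.inr ⟨a,rfl,rfl⟩))⟩
    · exact ⟨by simp, Or.inr (Or.inr (Or.inr ⟨a,rfl,rfl⟩))⟩

theorem stmt12 (G : SimpleGraph V) (n k : ℕ) (hn : Fintype.card V = n) :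
    (∃ D : Finset V, IndepSet G D ∧ DomSet G D ∧ D.card ≤ k) ↔
    (∃ S : Finset (V ⊕ V ⊕ V), InSDS (extPath2 G) S ∧ S.card ≤ n + k) := by
  classical
  constructor
  · rintro ⟨D, hI, hD, hk⟩
    set S : Finset (V ⊕ V ⊕ V) :=
      (D.image Sum.inl ∪ Dᶜ.image (fun v => Sum.inr (Sum.inl v)))
        ∪ D.image (fun v => Sum.inr (Sum.inr v)) with hS
    have hSl : ∀ v : V, (Sum.inl v : V ⊕ V ⊕ V) ∈ S ↔ v ∈ D := by
      intro v; simp [hS]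
    have hSa : ∀ v : V, (Sum.inr (Sum.inl v) : V ⊕ V ⊕ V) ∈ S ↔ v ∉ D := by
      intro v; simp [hS]
    have hSb : ∀ v : V, (Sum.inr (Sum.inr v) : V ⊕ V ⊕ V) ∈ S ↔ v ∈ D := by
      intro v; simp [hS]
    refine ⟨S, ⟨?_, ?_, ?_⟩, ?_⟩
    · -- independence
      intro a ha b hb hadj
      rw [ext_adj_iff] at hadj
      rcases hadj with ⟨x,y,rfl,rfl,hxy⟩|⟨x,rfl,rfl⟩|⟨x,rfl,rfl⟩|⟨x,rfl,rfl⟩|⟨x,rfl,rfl⟩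
      · exact hI x (by rwa [hSl] at ha) y (by rwa [hSl] at hb) hxy
      · exact (by rwa [hSa] at hb : x ∉ D) (by rwa [hSl] at ha)
      · exact (by rwa [hSa] at ha : x ∉ D) (by rwa [hSl] at hb)
      · exact (by rwa [hSa] at ha : x ∉ D) (by rwa [hSb] at hb)
      · exact (by rwa [hSa] at hb : x ∉ D) (by rwa [hSb] at ha)
    · -- domination
      rintro (v | v | v)
      · by_cases hv : v ∈ D
        · exact Or.inl ((hSl v).2 hv)
        · exact Or.inr ⟨Sum.inr (Sum.inl v), (hSa v).2 hv, by simp [ext_adj_iff]⟩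
      · by_cases hv : v ∈ D
        · exact Or.inr ⟨Sum.inl v, (hSl v).2 hv, by simp [ext_adj_iff]⟩
        · exact Or.inl ((hSa v).2 hv)
      · by_cases hv : v ∈ D
        · exact Or.inl ((hSb v).2 hv)
        · exact Or.inr ⟨Sum.inr (Sum.inl v), (hSa v).2 hv, by simp [ext_adj_iff]⟩
    · -- secure
      rintro (w | w | w) hu
      · -- u = inl w, so w ∉ D
        have hw : w ∉ D := fun h => hu ((hSl w).2 h)
        rcases hD w with h | ⟨d, hd, hdw⟩
        · exact absurd h hw
        refine ⟨Sum.inl d, (hSl d).2 hd, by simp [ext_adj_iff, hdw.symm], ?_⟩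
        rintro (x | x | x)
        · by_cases hx : x = w
          · subst hx; exact Or.inl (Finset.mem_insert_self _ _)
          by_cases hxD : x ∈ D
          · by_cases hxd : x = d
            · subst hxd
              exact Or.inr ⟨Sum.inl w, Finset.mem_insert_self _ _,
                by simp [ext_adj_iff, hdw.symm]⟩
            · exact Or.inl (Finset.mem_insert_of_mem
                (Finset.mem_erase.2 ⟨by simp [hxd], (hSl x).2 hxD⟩))
          · exact Or.inr ⟨Sum.inr (Sum.inl x), Finset.mem_insert_of_mem
              (Finset.mem_erase.2 ⟨by simp, (hSa x).2 hxD⟩), by simp [ext_adj_iff]⟩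
        · by_cases hxD : x ∈ D
          · by_cases hxd : x = d
            · subst hxd
              exact Or.inr ⟨Sum.inr (Sum.inr x), Finset.mem_insert_of_mem
                (Finset.mem_erase.2 ⟨by simp, (hSb x).2 hxD⟩), by simp [ext_adj_iff]⟩
            · exact Or.inr ⟨Sum.inl x, Finset.mem_insert_of_mem
                (Finset.mem_erase.2 ⟨by simp [hxd], (hSl x).2 hxD⟩), by simp [ext_adj_iff]⟩
          · exact Or.inl (Finset.mem_insert_of_mem
              (Finset.mem_erase.2 ⟨by simp, (hSa x).2 hxD⟩))
        · by_cases hxD : x ∈ D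
          · exact Or.inl (Finset.mem_insert_of_mem
              (Finset.mem_erase.2 ⟨by simp, (hSb x).2 hxD⟩))
          · exact Or.inr ⟨Sum.inr (Sum.inl x), Finset.mem_insert_of_mem
              (Finset.mem_erase.2 ⟨by simp, (hSa x).2 hxD⟩), by simp [ext_adj_iff]⟩
      · -- u = a_w, so w ∈ D
        have hw : w ∈ D := by by_contra h; exact hu ((hSa w).2 h)
        refine ⟨Sum.inr (Sum.inr w), (hSb w).2 hw, by simp [ext_adj_iff], ?_⟩
        rintro (x | x | x)
        · by_cases hxD : x ∈ D
          · exact Or.inl (Finset.mem_insert_of_mem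
              (Finset.mem_erase.2 ⟨by simp, (hSl x).2 hxD⟩))
          · exact Or.inr ⟨Sum.inr (Sum.inl x), Finset.mem_insert_of_mem
              (Finset.mem_erase.2 ⟨by simp, (hSa x).2 hxD⟩), by simp [ext_adj_iff]⟩
        · by_cases hx : x = w
          · subst hx; exact Or.inl (Finset.mem_insert_self _ _)
          by_cases hxD : x ∈ D
          · exact Or.inr ⟨Sum.inl x, Finset.mem_insert_of_mem
              (Finset.mem_erase.2 ⟨by simp, (hSl x).2 hxD⟩), by simp [ext_adj_iff]⟩
          · exact Or.inl (Finset.mem_insert_of_mem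
              (Finset.mem_erase.2 ⟨by simp, (hSa x).2 hxD⟩))
        · by_cases hx : x = w
          · subst hx
            exact Or.inr ⟨Sum.inr (Sum.inl x), Finset.mem_insert_self _ _,
              by simp [ext_adj_iff]⟩
          by_cases hxD : x ∈ D
          · exact Or.inl (Finset.mem_insert_of_mem
              (Finset.mem_erase.2 ⟨by simp [hx], (hSb x).2 hxD⟩))
          · exact Or.inr ⟨Sum.inr (Sum.inl x), Finset.mem_insert_of_mem
              (Finset.mem_erase.2 ⟨by simp, (hSa x).2 hxD⟩), by simp [ext_adj_iff]⟩
      · -- u = b_w, so w ∉ D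
        have hw : w ∉ D := fun h => hu ((hSb w).2 h)
        refine ⟨Sum.inr (Sum.inl w), (hSa w).2 hw, by simp [ext_adj_iff], ?_⟩
        rintro (x | x | x)
        · by_cases hxD : x ∈ D
          · exact Or.inl (Finset.mem_insert_of_mem
              (Finset.mem_erase.2 ⟨by simp, (hSl x).2 hxD⟩))
          · by_cases hx : x = w
            · subst hx
              rcases hD x with h | ⟨d, hd, hdx⟩
              · exact absurd h hxD
              · exact Or.inr ⟨Sum.inl d, Finset.mem_insert_of_mem
                  (Finset.mem_erase.2 ⟨by simp, (hSl d).2 hd⟩),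
                  by simp [ext_adj_iff, hdx]⟩
            · exact Or.inr ⟨Sum.inr (Sum.inl x), Finset.mem_insert_of_mem
                (Finset.mem_erase.2 ⟨by simp [hx], (hSa x).2 hxD⟩), by simp [ext_adj_iff]⟩
        · by_cases hx : x = w
          · subst hx
            exact Or.inr ⟨Sum.inr (Sum.inr x), Finset.mem_insert_self _ _,
              by simp [ext_adj_iff]⟩
          by_cases hxD : x ∈ D
          · exact Or.inr ⟨Sum.inl x, Finset.mem_insert_of_mem
              (Finset.mem_erase.2 ⟨by simp, (hSl x).2 hxD⟩), by simp [ext_adj_iff]⟩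
          · exact Or.inl (Finset.mem_insert_of_mem
              (Finset.mem_erase.2 ⟨by simp [hx], (hSa x).2 hxD⟩))
        · by_cases hx : x = w
          · subst hx; exact Or.inl (Finset.mem_insert_self _ _)
          by_cases hxD : x ∈ D
          · exact Or.inl (Finset.mem_insert_of_mem
              (Finset.mem_erase.2 ⟨by simp, (hSb x).2 hxD⟩))
          · exact Or.inr ⟨Sum.inr (Sum.inl x), Finset.mem_insert_of_mem
              (Finset.mem_erase.2 ⟨by simp [hx], (hSa x).2 hxD⟩), by simp [ext_adj_iff]⟩
    · -- cardinality
      have hdc : D.card ≤ n := hn ▸ Finset.card_le_univ D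
      have h1 : Disjoint (D.image Sum.inl)
          (Dᶜ.image (fun v => (Sum.inr (Sum.inl v) : V ⊕ V ⊕ V))) := by
        simp [Finset.disjoint_left]
      have h2 : Disjoint (D.image Sum.inl ∪ Dᶜ.image (fun v => (Sum.inr (Sum.inl v) : V ⊕ V ⊕ V)))
          (D.image (fun v => (Sum.inr (Sum.inr v) : V ⊕ V ⊕ V))) := by
        simp [Finset.disjoint_left]
      rw [hS, Finset.card_union_of_disjoint h2, Finset.card_union_of_disjoint h1,
        Finset.card_image_of_injective _ Sum.inl_injective,
        Finset.card_image_of_injective _ (by intro a b h; simpa using h),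
        Finset.card_image_of_injective _ (by intro a b h; simpa using h),
        Finset.card_compl, hn]
      omega
  · rintro ⟨S, ⟨hI, hDom, hSec⟩, hcard⟩
    set D : Finset V := Finset.univ.filter (fun v => (Sum.inl v : V ⊕ V ⊕ V) ∈ S) with hD
    have hDmem : ∀ v : V, v ∈ D ↔ (Sum.inl v : V ⊕ V ⊕ V) ∈ S := by
      intro v; simp [hD]
    -- exactly one of a_i, b_i in S
    have hone : ∀ i : V, ((Sum.inr (Sum.inl i) : V ⊕ V ⊕ V) ∈ S ∧
        (Sum.inr (Sum.inr i) : V ⊕ V ⊕ V) ∉ S) ∨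
        ((Sum.inr (Sum.inr i) : V ⊕ V ⊕ V) ∈ S ∧
        (Sum.inr (Sum.inl i) : V ⊕ V ⊕ V) ∉ S) := by
      intro i
      rcases hDom (Sum.inr (Sum.inr i)) with h | ⟨u, hu, hadj⟩
      · refine Or.inr ⟨h, fun ha => ?_⟩
        exact hI _ ha _ h (by simp [ext_adj_iff])
      · have : u = Sum.inr (Sum.inl i) := by
          rw [ext_adj_iff] at hadj
          rcases hadj with ⟨a,b,rfl,h,_⟩|⟨a,rfl,h⟩|⟨a,h,h'⟩|⟨a,rfl,h⟩|⟨a,rfl,h⟩ <;>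
            simp_all
        subst this
        refine Or.inl ⟨hu, fun hb => ?_⟩
        exact hI _ hu _ hb (by simp [ext_adj_iff])
    refine ⟨D, ?_, ?_, ?_⟩
    · -- independence
      intro a ha b hb hab
      exact hI _ ((hDmem a).1 ha) _ ((hDmem b).1 hb)
        (by rw [ext_adj_iff]; exact Or.inl ⟨a, b, rfl, rfl, hab⟩)
    · -- domination
      intro w
      by_cases hw : w ∈ D
      · exact Or.inl hw
      have hwS : (Sum.inl w : V ⊕ V ⊕ V) ∉ S := fun h => hw ((hDmem w).2 h)
      obtain ⟨v, hvS, hadj, hdom'⟩ := hSec (Sum.inl w) hwS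
      rw [ext_adj_iff] at hadj
      rcases hadj with ⟨a,b,h1,h2,hab⟩|⟨a,h1,h2⟩|⟨a,h1,h2⟩|⟨a,h1,h2⟩|⟨a,h1,h2⟩
      · -- v = inl b, actual neighbor in G
        rcases Sum.inl.inj h1 with rfl
        cases h2
        exact Or.inr ⟨b, (hDmem b).2 hvS, hab.symm⟩
      · -- v = a_w : impossible, b_w undominated after swap
        obtain rfl := Sum.inl.inj h1
        subst h2
        exfalso
        have hbS : (Sum.inr (Sum.inr w) : V ⊕ V ⊕ V) ∉ S := by
          rcases hone w with ⟨_, h⟩ | ⟨_, h⟩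
          · exact h
          · exact absurd hvS h
        rcases hdom' (Sum.inr (Sum.inr w)) with h | ⟨u, hu, hadj'⟩
        · rcases Finset.mem_insert.1 h with h | h
          · exact Sum.inr_ne_inl h
          · exact hbS (Finset.mem_of_mem_erase h)
        · have : u = Sum.inr (Sum.inl w) := by
            rw [ext_adj_iff] at hadj'
            rcases hadj' with ⟨c,d,rfl,h,_⟩|⟨c,rfl,h⟩|⟨c,h,h'⟩|⟨c,rfl,h⟩|⟨c,rfl,h⟩ <;>
              simp_all
          subst this
          rcases Finset.mem_insert.1 hu with h | h
          · exact Sum.inr_ne_inl h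
          · exact (Finset.mem_erase.1 h).1 rfl
      · exact absurd h1 Sum.inl_ne_inr
      · exact absurd h1 Sum.inl_ne_inr
      · exact absurd h1 Sum.inl_ne_inr
    · -- cardinality
      have hf : ∀ i : V, (if (Sum.inr (Sum.inl i) : V ⊕ V ⊕ V) ∈ S then
          (Sum.inr (Sum.inl i) : V ⊕ V ⊕ V) else Sum.inr (Sum.inr i)) ∈ S := by
        intro i
        rcases hone i with ⟨h1, _⟩ | ⟨h1, h2⟩
        · simpa [h1] using h1
        · simpa [h2] using h1
      set f : V → V ⊕ V ⊕ V := fun i => if (Sum.inr (Sum.inl i) : V ⊕ V ⊕ V) ∈ S then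
          Sum.inr (Sum.inl i) else Sum.inr (Sum.inr i) with hfdef
      have hfinj : Function.Injective f := by
        intro a b hab
        simp only [hfdef] at hab
        split_ifs at hab <;> simp_all
      have hsub : D.image Sum.inl ∪ Finset.univ.image f ⊆ S := by
        intro x hx
        rcases Finset.mem_union.1 hx with hx | hx
        · obtain ⟨v, hv, rfl⟩ := Finset.mem_image.1 hx
          exact (hDmem v).1 hv
        · obtain ⟨v, _, rfl⟩ := Finset.mem_image.1 hx
          exact hf v
      have hdisj : Disjoint (D.image Sum.inl) (Finset.univ.image f) := by
        rw [Finset.disjoint_left]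
        rintro x hx hx'
        obtain ⟨v, _, rfl⟩ := Finset.mem_image.1 hx
        obtain ⟨u, _, hu⟩ := Finset.mem_image.1 hx'
        simp only [hfdef] at hu
        split_ifs at hu <;> exact Sum.inr_ne_inl hu
      have hcard2 : D.card + n ≤ S.card := by
        have := Finset.card_le_card hsub
        rwa [Finset.card_union_of_disjoint hdisj,
          Finset.card_image_of_injective _ Sum.inl_injective,
          Finset.card_image_of_injective _ hfinj, Finset.card_univ, hn] at this
      omega
end

section
/- Let D be an independent dominating set of a graph G on vertex set {v_1,...,v_n}, and let G' be obtained from G by attaching to each v_i a path v_i – a_i – b_i with new vertices a_i, b_i. Then the set D ∪ {a_i : v_i ∉ D} ∪ {b_i : v_i ∈ D} is an independent secure dominating set of G' of size n + |D|. -/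
variable {V : Type*} [Fintype V] [DecidableEq V]

private lemma extAdj {G : SimpleGraph V} {x y : V ⊕ V ⊕ V} :
    (extPath2 G).Adj x y ↔ x ≠ y ∧
      ((∃ a b, x = Sum.inl a ∧ y = Sum.inl b ∧ G.Adj a b) ∨
       (∃ a, x = Sum.inl a ∧ y = Sum.inr (Sum.inl a)) ∨
       (∃ a, x = Sum.inr (Sum.inl a) ∧ y = Sum.inr (Sum.inr a)) ∨
       (∃ a b, y = Sum.inl a ∧ x = Sum.inl b ∧ G.Adj a b) ∨
       (∃ a, y = Sum.inl a ∧ x = Sum.inr (Sum.inl a)) ∨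
       (∃ a, y = Sum.inr (Sum.inl a) ∧ x = Sum.inr (Sum.inr a))) := by
  simp only [extPath2, SimpleGraph.fromRel_adj]
  aesop

private lemma adjA {G : SimpleGraph V} {u v : V} (h : G.Adj u v) :
    (extPath2 G).Adj (Sum.inl u) (Sum.inl v) := by
  rw [extAdj]; exact ⟨by simpa using h.ne, Or.inl ⟨u, v, rfl, rfl, h⟩⟩

private lemma adjB {G : SimpleGraph V} (v : V) :
    (extPath2 G).Adj (Sum.inl v) (Sum.inr (Sum.inl v)) := by
  rw [extAdj]; exact ⟨by simp, Or.inr (Or.inl ⟨v, rfl, rfl⟩)⟩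

private lemma adjC {G : SimpleGraph V} (v : V) :
    (extPath2 G).Adj (Sum.inr (Sum.inl v)) (Sum.inr (Sum.inr v)) := by
  rw [extAdj]; exact ⟨by simp, Or.inr (Or.inr (Or.inl ⟨v, rfl, rfl⟩))⟩

theorem stmt13 (G : SimpleGraph V) (D : Finset V)
    (hind : IndepSet G D) (hdom : DomSet G D) :
    InSDS (extPath2 G)
      ((D.image (Sum.inl : V → V ⊕ V ⊕ V)) ∪
        ((Finset.univ \ D).image (fun v : V => (Sum.inr (Sum.inl v) : V ⊕ V ⊕ V))) ∪
        (D.image (fun v : V => (Sum.inr (Sum.inr v) : V ⊕ V ⊕ V)))) ∧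
    ((D.image (Sum.inl : V → V ⊕ V ⊕ V)) ∪
        ((Finset.univ \ D).image (fun v : V => (Sum.inr (Sum.inl v) : V ⊕ V ⊕ V))) ∪
        (D.image (fun v : V => (Sum.inr (Sum.inr v) : V ⊕ V ⊕ V)))).card =
      Fintype.card V + D.card := by
  classical
  set S := ((D.image (Sum.inl : V → V ⊕ V ⊕ V)) ∪
        ((Finset.univ \ D).image (fun v : V => (Sum.inr (Sum.inl v) : V ⊕ V ⊕ V))) ∪
        (D.image (fun v : V => (Sum.inr (Sum.inr v) : V ⊕ V ⊕ V)))) with hS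
  have hinl : ∀ v : V, (Sum.inl v : V ⊕ V ⊕ V) ∈ S ↔ v ∈ D := by
    intro v; simp [hS]
  have ha : ∀ v : V, (Sum.inr (Sum.inl v) : V ⊕ V ⊕ V) ∈ S ↔ v ∉ D := by
    intro v; simp [hS]
  have hb : ∀ v : V, (Sum.inr (Sum.inr v) : V ⊕ V ⊕ V) ∈ S ↔ v ∈ D := by
    intro v; simp [hS]
  have hIndep : IndepSet (extPath2 G) S := by
    intro x hx y hy hadj
    rw [extAdj] at hadj
    obtain ⟨hne, hc⟩ := hadj
    rcases hc with ⟨a, b, rfl, rfl, hab⟩ | ⟨a, rfl, rfl⟩ | ⟨a, rfl, rfl⟩ |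
      ⟨a, b, rfl, rfl, hab⟩ | ⟨a, rfl, rfl⟩ | ⟨a, rfl, rfl⟩
    · exact hind a ((hinl a).mp hx) b ((hinl b).mp hy) hab
    · exact ((ha a).mp hy) ((hinl a).mp hx)
    · exact ((ha a).mp hx) ((hb a).mp hy)
    · exact hind b ((hinl b).mp hx) a ((hinl a).mp hy) hab.symm
    · exact ((ha a).mp hx) ((hinl a).mp hy)
    · exact ((ha a).mp hy) ((hb a).mp hx)
  have hDom : DomSet (extPath2 G) S := by
    intro w
    rcases w with v | v | v
    · by_cases hv : v ∈ D
      · exact Or.inl ((hinl v).mpr hv)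
      · rcases hdom v with hv' | ⟨u, hu, hadj⟩
        · exact absurd hv' hv
        · exact Or.inr ⟨Sum.inl u, (hinl u).mpr hu, adjA hadj⟩
    · by_cases hv : v ∈ D
      · exact Or.inr ⟨Sum.inl v, (hinl v).mpr hv, adjB v⟩
      · exact Or.inl ((ha v).mpr hv)
    · by_cases hv : v ∈ D
      · exact Or.inl ((hb v).mpr hv)
      · exact Or.inr ⟨Sum.inr (Sum.inl v), (ha v).mpr hv, adjC v⟩
  have hSec : ∀ u ∉ S, ∃ w ∈ S, (extPath2 G).Adj u w ∧
      DomSet (extPath2 G) (insert u (S.erase w)) := by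
    intro u hu
    rcases u with v | v | v
    · -- u = inl v, so v ∉ D
      have hv : v ∉ D := fun h => hu ((hinl v).mpr h)
      obtain ⟨t, ht, hadj⟩ : ∃ t ∈ D, G.Adj t v := by
        rcases hdom v with h | h
        · exact absurd h hv
        · exact h
      refine ⟨Sum.inl t, (hinl t).mpr ht, (adjA hadj).symm, ?_⟩
      intro w
      rcases w with x | x | x
      · by_cases hx : x = v
        · subst hx; exact Or.inl (Finset.mem_insert_self _ _)
        · by_cases hxD : x ∈ D
          · by_cases hxt : x = t
            · subst hxt
              exact Or.inr ⟨Sum.inl v, Finset.mem_insert_self _ _, adjA hadj.symm⟩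
            · exact Or.inl (Finset.mem_insert_of_mem (Finset.mem_erase.mpr
                ⟨by simp [hxt], (hinl x).mpr hxD⟩))
          · exact Or.inr ⟨Sum.inr (Sum.inl x), Finset.mem_insert_of_mem
              (Finset.mem_erase.mpr ⟨by simp, (ha x).mpr hxD⟩), (adjB x).symm⟩
      · by_cases hxD : x ∈ D
        · exact Or.inr ⟨Sum.inr (Sum.inr x), Finset.mem_insert_of_mem
            (Finset.mem_erase.mpr ⟨by simp, (hb x).mpr hxD⟩), (adjC x).symm⟩
        · exact Or.inl (Finset.mem_insert_of_mem (Finset.mem_erase.mpr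
            ⟨by simp, (ha x).mpr hxD⟩))
      · by_cases hxD : x ∈ D
        · exact Or.inl (Finset.mem_insert_of_mem (Finset.mem_erase.mpr
            ⟨by simp, (hb x).mpr hxD⟩))
        · exact Or.inr ⟨Sum.inr (Sum.inl x), Finset.mem_insert_of_mem
            (Finset.mem_erase.mpr ⟨by simp, (ha x).mpr hxD⟩), adjC x⟩
    · -- u = inr (inl v), so v ∈ D
      have hv : v ∈ D := by
        by_contra h; exact hu ((ha v).mpr h)
      refine ⟨Sum.inl v, (hinl v).mpr hv, (adjB v).symm, ?_⟩
      intro w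
      rcases w with x | x | x
      · by_cases hx : x = v
        · subst hx
          exact Or.inr ⟨Sum.inr (Sum.inl x), Finset.mem_insert_self _ _, (adjB x).symm⟩
        · by_cases hxD : x ∈ D
          · exact Or.inl (Finset.mem_insert_of_mem (Finset.mem_erase.mpr
              ⟨by simp [hx], (hinl x).mpr hxD⟩))
          · exact Or.inr ⟨Sum.inr (Sum.inl x), Finset.mem_insert_of_mem
              (Finset.mem_erase.mpr ⟨by simp, (ha x).mpr hxD⟩), (adjB x).symm⟩
      · by_cases hx : x = v
        · subst hx; exact Or.inl (Finset.mem_insert_self _ _)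
        · by_cases hxD : x ∈ D
          · exact Or.inr ⟨Sum.inr (Sum.inr x), Finset.mem_insert_of_mem
              (Finset.mem_erase.mpr ⟨by simp, (hb x).mpr hxD⟩), (adjC x).symm⟩
          · exact Or.inl (Finset.mem_insert_of_mem (Finset.mem_erase.mpr
              ⟨by simp, (ha x).mpr hxD⟩))
      · by_cases hxD : x ∈ D
        · exact Or.inl (Finset.mem_insert_of_mem (Finset.mem_erase.mpr
            ⟨by simp, (hb x).mpr hxD⟩))
        · exact Or.inr ⟨Sum.inr (Sum.inl x), Finset.mem_insert_of_mem
            (Finset.mem_erase.mpr ⟨by simp, (ha x).mpr hxD⟩), adjC x⟩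
    · -- u = inr (inr v), so v ∉ D
      have hv : v ∉ D := fun h => hu ((hb v).mpr h)
      refine ⟨Sum.inr (Sum.inl v), (ha v).mpr hv, (adjC v).symm, ?_⟩
      intro w
      rcases w with x | x | x
      · by_cases hxD : x ∈ D
        · exact Or.inl (Finset.mem_insert_of_mem (Finset.mem_erase.mpr
            ⟨by simp, (hinl x).mpr hxD⟩))
        · by_cases hx : x = v
          · subst hx
            obtain ⟨t, ht, hadj⟩ : ∃ t ∈ D, G.Adj t x := by
              rcases hdom x with h | h
              · exact absurd h hxD
              · exact h
            exact Or.inr ⟨Sum.inl t, Finset.mem_insert_of_mem (Finset.mem_erase.mpr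
              ⟨by simp, (hinl t).mpr ht⟩), adjA hadj⟩
          · exact Or.inr ⟨Sum.inr (Sum.inl x), Finset.mem_insert_of_mem
              (Finset.mem_erase.mpr ⟨by simp [hx], (ha x).mpr hxD⟩), (adjB x).symm⟩
      · by_cases hxD : x ∈ D
        · exact Or.inr ⟨Sum.inl x, Finset.mem_insert_of_mem (Finset.mem_erase.mpr
            ⟨by simp, (hinl x).mpr hxD⟩), adjB x⟩
        · by_cases hx : x = v
          · subst hx
            exact Or.inr ⟨Sum.inr (Sum.inr x), Finset.mem_insert_self _ _, (adjC x).symm⟩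
          · exact Or.inl (Finset.mem_insert_of_mem (Finset.mem_erase.mpr
              ⟨by simp [hx], (ha x).mpr hxD⟩))
      · by_cases hxD : x ∈ D
        · exact Or.inl (Finset.mem_insert_of_mem (Finset.mem_erase.mpr
            ⟨by simp, (hb x).mpr hxD⟩))
        · by_cases hx : x = v
          · subst hx; exact Or.inl (Finset.mem_insert_self _ _)
          · exact Or.inr ⟨Sum.inr (Sum.inl x), Finset.mem_insert_of_mem
              (Finset.mem_erase.mpr ⟨by simp [hx], (ha x).mpr hxD⟩), adjC x⟩
  refine ⟨⟨hIndep, hDom, hSec⟩, ?_⟩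
  rw [hS, Finset.card_union_of_disjoint, Finset.card_union_of_disjoint]
  · rw [Finset.card_image_of_injective _ Sum.inl_injective,
        Finset.card_image_of_injective _ (fun a b h => by simpa using h),
        Finset.card_image_of_injective _ (fun a b h => by simpa using h),
        Finset.card_sdiff_of_subset (Finset.subset_univ D), Finset.card_univ]
    have hle : D.card ≤ Fintype.card V := by
      have := Finset.card_le_univ D
      simpa [Finset.card_univ] using this
    omega
  · simp [Finset.disjoint_left]
  · simp [Finset.disjoint_left]
end

section
/- Let G' be the GP graph obtained from a graph G on n vertices by attaching to each vertex v_i a pendant path v_i – a_i – b_i – c_i. Then G has a dominating set of size at most k if and only if G' has a dominating set of size at most k + n. -/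
variable {V : Type*} [Fintype V] [DecidableEq V]

/-- The GP graph obtained from `G`: to each vertex `vᵢ` attach a pendant path
`vᵢ – aᵢ – bᵢ – cᵢ`, where `aᵢ = Sum.inr (i,0)`, `bᵢ = Sum.inr (i,1)`, `cᵢ = Sum.inr (i,2)`. -/
def gpGraph (G : SimpleGraph V) : SimpleGraph (V ⊕ V × Fin 3) :=
  SimpleGraph.fromRel (fun x y =>
    (∃ a b, x = Sum.inl a ∧ y = Sum.inl b ∧ G.Adj a b) ∨
    (∃ a, x = Sum.inl a ∧ y = Sum.inr (a, 0)) ∨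
    (∃ a, x = Sum.inr (a, 0) ∧ y = Sum.inr (a, 1)) ∨
    (∃ a, x = Sum.inr (a, 1) ∧ y = Sum.inr (a, 2)))

omit [Fintype V] [DecidableEq V] in
lemma gp_adj (G : SimpleGraph V) (x y : V ⊕ V × Fin 3) :
    (gpGraph G).Adj x y ↔ x ≠ y ∧
      (((∃ a b, x = Sum.inl a ∧ y = Sum.inl b ∧ G.Adj a b) ∨
        (∃ a, x = Sum.inl a ∧ y = Sum.inr (a, 0)) ∨
        (∃ a, x = Sum.inr (a, 0) ∧ y = Sum.inr (a, 1)) ∨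
        (∃ a, x = Sum.inr (a, 1) ∧ y = Sum.inr (a, 2))) ∨
       ((∃ a b, y = Sum.inl a ∧ x = Sum.inl b ∧ G.Adj a b) ∨
        (∃ a, y = Sum.inl a ∧ x = Sum.inr (a, 0)) ∨
        (∃ a, y = Sum.inr (a, 0) ∧ x = Sum.inr (a, 1)) ∨
        (∃ a, y = Sum.inr (a, 1) ∧ x = Sum.inr (a, 2)))) := by
  simp [gpGraph, SimpleGraph.fromRel_adj]

theorem stmt15 (G : SimpleGraph V) (n k : ℕ) (hn : Fintype.card V = n) :
    (∃ D : Finset V, DomSet G D ∧ D.card ≤ k) ↔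
    (∃ D' : Finset (V ⊕ V × Fin 3), DomSet (gpGraph G) D' ∧ D'.card ≤ k + n) := by
  classical
  constructor
  · rintro ⟨D, hD, hcard⟩
    refine ⟨D.image Sum.inl ∪ Finset.univ.image (fun v => Sum.inr (v, 1)), ?_, ?_⟩
    · intro x
      match x with
      | Sum.inl v =>
        rcases hD v with hv | ⟨u, hu, huv⟩
        · exact Or.inl (by simp [hv])
        · refine Or.inr ⟨Sum.inl u, by simp [hu], ?_⟩
          rw [gp_adj]
          exact ⟨by simp [huv.ne], Or.inl (Or.inl ⟨u, v, rfl, rfl, huv⟩)⟩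
      | Sum.inr (v, 0) =>
        refine Or.inr ⟨Sum.inr (v, 1), by simp, ?_⟩
        rw [gp_adj]
        exact ⟨by simp, Or.inr (Or.inr (Or.inr (Or.inl ⟨v, rfl, rfl⟩)))⟩
      | Sum.inr (v, 1) => exact Or.inl (by simp)
      | Sum.inr (v, 2) =>
        refine Or.inr ⟨Sum.inr (v, 1), by simp, ?_⟩
        rw [gp_adj]
        exact ⟨by simp, Or.inl (Or.inr (Or.inr (Or.inr ⟨v, rfl, rfl⟩)))⟩
    · refine le_trans (Finset.card_union_le _ _) ?_
      gcongr
      · exact (Finset.card_image_le).trans hcard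
      · rw [Finset.card_image_of_injective _ (fun a b h => by simpa using h)]
        simp [hn]
  · rintro ⟨D', hD', hcard⟩
    set D : Finset V := Finset.univ.filter
        (fun v => Sum.inl v ∈ D' ∨ Sum.inr (v, (0 : Fin 3)) ∈ D') with hDdef
    have hBC : ∀ v : V, Sum.inr (v, (1 : Fin 3)) ∈ D' ∨ Sum.inr (v, (2 : Fin 3)) ∈ D' := by
      intro v
      rcases hD' (Sum.inr (v, 2)) with h | ⟨u, hu, huv⟩
      · exact Or.inr h
      · rw [gp_adj] at huv
        rcases huv with ⟨_, h | h⟩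
        · rcases h with ⟨a, b, _, hb, _⟩ | ⟨a, _, hb⟩ | ⟨a, _, hb⟩ | ⟨a, ha, hb⟩
          · exact absurd hb (by simp)
          · exact absurd hb (by simp)
          · exact absurd hb (by simp [Fin.ext_iff] at hb ⊢)
          · obtain ⟨rfl, h1⟩ : a = v ∧ u = Sum.inr (a, 1) := by
              constructor
              · simpa [Fin.ext_iff] using hb.symm
              · exact ha
            exact Or.inl (h1 ▸ hu)
        · rcases h with ⟨a, b, ha, _, _⟩ | ⟨a, ha, _⟩ | ⟨a, ha, _⟩ | ⟨a, ha, _⟩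
          · exact absurd ha (by simp)
          · exact absurd ha (by simp)
          · exact absurd ha (by simp [Fin.ext_iff])
          · exact absurd ha (by simp [Fin.ext_iff])
    refine ⟨D, ?_, ?_⟩
    · intro v
      rcases hD' (Sum.inl v) with h | ⟨u, hu, huv⟩
      · exact Or.inl (by simp [hDdef, h])
      · rw [gp_adj] at huv
        rcases huv with ⟨_, h | h⟩
        · rcases h with ⟨a, b, ha, hb, hadj⟩ | ⟨a, ha, hb⟩ | ⟨a, ha, hb⟩ | ⟨a, ha, hb⟩
          · obtain rfl : u = Sum.inl a := ha
            obtain rfl : v = b := by simpa using hb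
            exact Or.inr ⟨a, by simp [hDdef, hu], hadj⟩
          · exact absurd hb (by simp)
          · exact absurd hb (by simp)
          · exact absurd hb (by simp)
        · rcases h with ⟨a, b, ha, hb, hadj⟩ | ⟨a, ha, hb⟩ | ⟨a, ha, hb⟩ | ⟨a, ha, hb⟩
          · obtain rfl : u = Sum.inl b := hb
            obtain rfl : v = a := by simpa using ha
            exact Or.inr ⟨b, by simp [hDdef, hu], hadj.symm⟩
          · obtain rfl : v = a := by simpa using ha
            obtain rfl : u = Sum.inr (v, 0) := hb
            exact Or.inl (by simp [hDdef, hu])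
          · exact absurd ha (by simp)
          · exact absurd ha (by simp)
    · -- cardinality
      set T := D'.filter (fun x => match x with
        | Sum.inl _ => True
        | Sum.inr (_, i) => i = 0) with hT
      set B := D'.filter (fun x => match x with
        | Sum.inl _ => False
        | Sum.inr (_, i) => i = 1 ∨ i = 2) with hB
      have hdisj : Disjoint T B := by
        rw [Finset.disjoint_left]
        intro x hxT hxB
        simp only [hT, hB, Finset.mem_filter] at hxT hxB
        match x with
        | Sum.inl _ => exact hxB.2
        | Sum.inr (_, i) =>
          rcases hxB.2 with h | h <;> simp [hxT.2] at h
      have hsub : T ∪ B ⊆ D' := by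
        intro x hx
        rcases Finset.mem_union.mp hx with h | h
        · exact (Finset.mem_filter.mp h).1
        · exact (Finset.mem_filter.mp h).1
      have hTB : T.card + B.card ≤ D'.card := by
        rw [← Finset.card_union_of_disjoint hdisj]
        exact Finset.card_le_card hsub
      -- |D| ≤ |T|
      have hDT : D.card ≤ T.card := by
        apply Finset.card_le_card_of_injOn
          (fun v => if Sum.inl v ∈ D' then Sum.inl v else Sum.inr (v, 0))
        · intro v hv
          simp only [Finset.mem_coe, hDdef, Finset.mem_filter] at hv
          by_cases h : Sum.inl v ∈ D'
          · simp [hT, h]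
          · rcases hv.2 with h' | h'
            · exact absurd h' h
            · simp [hT, h, h']
        · intro a _ b _ hab
          by_cases ha : Sum.inl a ∈ D' <;> by_cases hb : Sum.inl b ∈ D' <;>
            simp [ha, hb] at hab <;> tauto
      -- n ≤ |B|
      have hnB : n ≤ B.card := by
        rw [← hn, ← Finset.card_univ]
        apply Finset.card_le_card_of_injOn
          (fun v => if Sum.inr (v, (1 : Fin 3)) ∈ D' then Sum.inr (v, 1) else Sum.inr (v, 2))
        · intro v _
          by_cases h : Sum.inr (v, (1 : Fin 3)) ∈ D'
          · simp [hB, h]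
          · rcases hBC v with h' | h'
            · exact absurd h' h
            · simp [hB, h, h']
        · intro a _ b _ hab
          by_cases ha : Sum.inr (a, (1 : Fin 3)) ∈ D' <;>
            by_cases hb : Sum.inr (b, (1 : Fin 3)) ∈ D' <;>
            simp [ha, hb, Fin.ext_iff] at hab <;> tauto
      omega
end

section
/- Let G=(V,E) be a graph with maximum degree 3 and V = {v_1,...,v_n}. Construct G' by adding, for each i, new vertices p_i, q_i, r_i, s_i, t_i and edges (v_i,q_i), (q_i,p_i), (v_i,r_i), (r_i,s_i), (r_i,t_i). If D* is a minimum independent dominating set of G and S* is a minimum independent secure dominating set of G', then |S*| = |D*| + 3n. -/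
set_option linter.unusedSectionVars false
set_option maxHeartbeats 1000000


variable {V : Type*} [Fintype V] [DecidableEq V]

/-- The graph `G'` of the APX-hardness reduction: to each vertex `vᵢ` attach
`pᵢ = (i,0)`, `qᵢ = (i,1)`, `rᵢ = (i,2)`, `sᵢ = (i,3)`, `tᵢ = (i,4)` with edges
`(vᵢ,qᵢ), (qᵢ,pᵢ), (vᵢ,rᵢ), (rᵢ,sᵢ), (rᵢ,tᵢ)`. -/
def apxGraph (G : SimpleGraph V) : SimpleGraph (V ⊕ V × Fin 5) :=
  SimpleGraph.fromRel (fun x y =>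
    (∃ a b, x = Sum.inl a ∧ y = Sum.inl b ∧ G.Adj a b) ∨
    (∃ a, x = Sum.inl a ∧ y = Sum.inr (a, 1)) ∨
    (∃ a, x = Sum.inr (a, 1) ∧ y = Sum.inr (a, 0)) ∨
    (∃ a, x = Sum.inl a ∧ y = Sum.inr (a, 2)) ∨
    (∃ a, x = Sum.inr (a, 2) ∧ y = Sum.inr (a, 3)) ∨
    (∃ a, x = Sum.inr (a, 2) ∧ y = Sum.inr (a, 4)))

lemma adj_ll (G : SimpleGraph V) (a b : V) : (apxGraph G).Adj (Sum.inl a) (Sum.inl b) ↔ G.Adj a b := by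
  simp only [apxGraph, SimpleGraph.fromRel_adj]
  constructor
  · rintro ⟨h, h1 | h2⟩
    · aesop
    · have := G.adj_comm a b
      aesop
  · intro h; exact ⟨fun he => G.ne_of_adj h (by simpa using he), Or.inl (Or.inl ⟨a, b, rfl, rfl, h⟩)⟩

lemma adj_lr (G : SimpleGraph V) (a b : V) (j : Fin 5) :
    (apxGraph G).Adj (Sum.inl a) (Sum.inr (b, j)) ↔ a = b ∧ (j = 1 ∨ j = 2) := by
  simp only [apxGraph, SimpleGraph.fromRel_adj]; aesop

lemma adj_rl (G : SimpleGraph V) (a b : V) (j : Fin 5) :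
    (apxGraph G).Adj (Sum.inr (b, j)) (Sum.inl a) ↔ a = b ∧ (j = 1 ∨ j = 2) := by
  rw [SimpleGraph.adj_comm]; exact adj_lr G a b j

lemma adj_rr (G : SimpleGraph V) (a b : V) (i j : Fin 5) :
    (apxGraph G).Adj (Sum.inr (a, i)) (Sum.inr (b, j)) ↔ a = b ∧
      ((i = 1 ∧ j = 0) ∨ (i = 0 ∧ j = 1) ∨ (i = 2 ∧ j = 3) ∨ (i = 3 ∧ j = 2) ∨ (i = 2 ∧ j = 4) ∨ (i = 4 ∧ j = 2)) := by
  simp only [apxGraph, SimpleGraph.fromRel_adj]; aesop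

lemma card_split (S : Finset (V ⊕ V × Fin 5))
    (h2 : ∀ a : V, Sum.inr (a, (2:Fin 5)) ∉ S)
    (h3 : ∀ a : V, Sum.inr (a, (3:Fin 5)) ∈ S)
    (h4 : ∀ a : V, Sum.inr (a, (4:Fin 5)) ∈ S)
    (h01 : ∀ a : V, ¬(Sum.inr (a, (0:Fin 5)) ∈ S ∧ Sum.inr (a, (1:Fin 5)) ∈ S))
    (h01' : ∀ a : V, Sum.inr (a, (0:Fin 5)) ∈ S ∨ Sum.inr (a, (1:Fin 5)) ∈ S) :
    S.card = (Finset.univ.filter fun a : V => Sum.inl a ∈ S).card + 3 * Fintype.card V := by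
  classical
  set T : Finset V := Finset.univ.filter fun a : V => Sum.inl a ∈ S with hT
  set R : Finset (V × Fin 5) := Finset.univ.filter fun p : V × Fin 5 => Sum.inr p ∈ S with hR
  have hSeq : S = T.image Sum.inl ∪ R.image Sum.inr := by
    ext x
    rcases x with b | ⟨b, j⟩ <;> simp [hT, hR]
  have hdisj : Disjoint (T.image Sum.inl) (R.image Sum.inr : Finset (V ⊕ V × Fin 5)) := by
    simp [Finset.disjoint_left]
  have hRcard : R.card = 3 * Fintype.card V := by
    have := Finset.card_eq_sum_card_fiberwise (f := Prod.fst) (s := R) (t := Finset.univ)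
      (fun p _ => Finset.mem_univ _)
    rw [this]
    have hj5 : ∀ k : Fin 5, k = 0 ∨ k = 1 ∨ k = 2 ∨ k = 3 ∨ k = 4 := by decide
    have hfib : ∀ a : V, (R.filter fun p => p.1 = a).card = 3 := by
      intro a
      by_cases h0 : Sum.inr (a, (0:Fin 5)) ∈ S
      · have he : (R.filter fun p => p.1 = a) = {(a,0),(a,3),(a,4)} := by
          ext ⟨b, j⟩
          simp only [Finset.mem_filter, hR, Finset.mem_univ, true_and, Finset.mem_insert,
            Finset.mem_singleton, Prod.mk.injEq]
          constructor
          · rintro ⟨hm, rfl⟩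
            rcases hj5 j with rfl | rfl | rfl | rfl | rfl
            · exact Or.inl ⟨rfl, rfl⟩
            · exact absurd ⟨h0, hm⟩ (h01 _)
            · exact absurd hm (h2 _)
            · exact Or.inr (Or.inl ⟨rfl, rfl⟩)
            · exact Or.inr (Or.inr ⟨rfl, rfl⟩)
          · rintro (⟨rfl, rfl⟩ | ⟨rfl, rfl⟩ | ⟨rfl, rfl⟩)
            · exact ⟨h0, rfl⟩
            · exact ⟨h3 _, rfl⟩
            · exact ⟨h4 _, rfl⟩
        rw [he, Finset.card_insert_of_notMem (by simp), Finset.card_insert_of_notMem (by simp), Finset.card_singleton]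
      · have hq : Sum.inr (a, (1:Fin 5)) ∈ S := (h01' a).resolve_left h0
        have he : (R.filter fun p => p.1 = a) = {(a,1),(a,3),(a,4)} := by
          ext ⟨b, j⟩
          simp only [Finset.mem_filter, hR, Finset.mem_univ, true_and, Finset.mem_insert,
            Finset.mem_singleton, Prod.mk.injEq]
          constructor
          · rintro ⟨hm, rfl⟩
            rcases hj5 j with rfl | rfl | rfl | rfl | rfl
            · exact absurd hm h0
            · exact Or.inl ⟨rfl, rfl⟩
            · exact absurd hm (h2 _)
            · exact Or.inr (Or.inl ⟨rfl, rfl⟩)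
            · exact Or.inr (Or.inr ⟨rfl, rfl⟩)
          · rintro (⟨rfl, rfl⟩ | ⟨rfl, rfl⟩ | ⟨rfl, rfl⟩)
            · exact ⟨hq, rfl⟩
            · exact ⟨h3 _, rfl⟩
            · exact ⟨h4 _, rfl⟩
        rw [he, Finset.card_insert_of_notMem (by simp), Finset.card_insert_of_notMem (by simp), Finset.card_singleton]
    simp [hfib, Finset.sum_const, mul_comm]
  rw [hSeq, Finset.card_union_of_disjoint hdisj,
    Finset.card_image_of_injective _ Sum.inl_injective,
    Finset.card_image_of_injective _ Sum.inr_injective, hRcard]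

lemma adj_to_l (G : SimpleGraph V) (u : V ⊕ V × Fin 5) (a : V) :
    (apxGraph G).Adj u (Sum.inl a) ↔ (∃ b, u = Sum.inl b ∧ G.Adj b a) ∨ u = Sum.inr (a,1) ∨ u = Sum.inr (a,2) := by
  rcases u with b | ⟨b, j⟩
  · simp [adj_ll]
  · simp only [adj_rl]
    constructor
    · rintro ⟨rfl, h | h⟩ <;> simp [h]
    · rintro (⟨c, h, _⟩ | h | h) <;> simp_all <;> tauto

lemma fin5cases (j : Fin 5) : j = 0 ∨ j = 1 ∨ j = 2 ∨ j = 3 ∨ j = 4 := by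
  rcases (by decide : ∀ k : Fin 5, k = 0 ∨ k = 1 ∨ k = 2 ∨ k = 3 ∨ k = 4) j with h|h|h|h|h <;> tauto

lemma adj_to0 (G : SimpleGraph V) (u : V ⊕ V × Fin 5) (a : V) :
    (apxGraph G).Adj u (Sum.inr (a,0)) ↔ u = Sum.inr (a,1) := by
  constructor
  · intro h
    rcases u with b | ⟨b, j⟩
    · rw [adj_lr] at h; rcases h.2 with h' | h' <;> exact absurd h' (by decide)
    · rw [adj_rr] at h; obtain ⟨rfl, h⟩ := h
      rcases h with ⟨h1,h2⟩|⟨h1,h2⟩|⟨h1,h2⟩|⟨h1,h2⟩|⟨h1,h2⟩|⟨h1,h2⟩ <;>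
        first | (exact absurd h2 (by decide)) | (subst h1; rfl)
  · rintro rfl; rw [adj_rr]; exact ⟨rfl, by decide⟩

lemma adj_to1 (G : SimpleGraph V) (u : V ⊕ V × Fin 5) (a : V) :
    (apxGraph G).Adj u (Sum.inr (a,1)) ↔ u = Sum.inl a ∨ u = Sum.inr (a,0) := by
  constructor
  · intro h
    rcases u with b | ⟨b, j⟩
    · rw [adj_lr] at h; obtain ⟨rfl, _⟩ := h; exact Or.inl rfl
    · rw [adj_rr] at h; obtain ⟨rfl, h⟩ := h
      rcases h with ⟨h1,h2⟩|⟨h1,h2⟩|⟨h1,h2⟩|⟨h1,h2⟩|⟨h1,h2⟩|⟨h1,h2⟩ <;>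
        first | (exact absurd h2 (by decide)) | (subst h1; exact Or.inr rfl)
  · rintro (rfl | rfl)
    · rw [adj_lr]; exact ⟨rfl, by decide⟩
    · rw [adj_rr]; exact ⟨rfl, by decide⟩

lemma adj_to2 (G : SimpleGraph V) (u : V ⊕ V × Fin 5) (a : V) :
    (apxGraph G).Adj u (Sum.inr (a,2)) ↔ u = Sum.inl a ∨ u = Sum.inr (a,3) ∨ u = Sum.inr (a,4) := by
  constructor
  · intro h
    rcases u with b | ⟨b, j⟩
    · rw [adj_lr] at h; obtain ⟨rfl, _⟩ := h; exact Or.inl rfl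
    · rw [adj_rr] at h; obtain ⟨rfl, h⟩ := h
      rcases h with ⟨h1,h2⟩|⟨h1,h2⟩|⟨h1,h2⟩|⟨h1,h2⟩|⟨h1,h2⟩|⟨h1,h2⟩ <;>
        first | (exact absurd h2 (by decide)) | (subst h1; exact Or.inr (Or.inl rfl)) | (subst h1; exact Or.inr (Or.inr rfl))
  · rintro (rfl | rfl | rfl)
    · rw [adj_lr]; exact ⟨rfl, by decide⟩
    · rw [adj_rr]; exact ⟨rfl, by decide⟩
    · rw [adj_rr]; exact ⟨rfl, by decide⟩

lemma adj_to3 (G : SimpleGraph V) (u : V ⊕ V × Fin 5) (a : V) :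
    (apxGraph G).Adj u (Sum.inr (a,3)) ↔ u = Sum.inr (a,2) := by
  constructor
  · intro h
    rcases u with b | ⟨b, j⟩
    · rw [adj_lr] at h; rcases h.2 with h' | h' <;> exact absurd h' (by decide)
    · rw [adj_rr] at h; obtain ⟨rfl, h⟩ := h
      rcases h with ⟨h1,h2⟩|⟨h1,h2⟩|⟨h1,h2⟩|⟨h1,h2⟩|⟨h1,h2⟩|⟨h1,h2⟩ <;>
        first | (exact absurd h2 (by decide)) | (subst h1; rfl)
  · rintro rfl; rw [adj_rr]; exact ⟨rfl, by decide⟩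

lemma adj_to4 (G : SimpleGraph V) (u : V ⊕ V × Fin 5) (a : V) :
    (apxGraph G).Adj u (Sum.inr (a,4)) ↔ u = Sum.inr (a,2) := by
  constructor
  · intro h
    rcases u with b | ⟨b, j⟩
    · rw [adj_lr] at h; rcases h.2 with h' | h' <;> exact absurd h' (by decide)
    · rw [adj_rr] at h; obtain ⟨rfl, h⟩ := h
      rcases h with ⟨h1,h2⟩|⟨h1,h2⟩|⟨h1,h2⟩|⟨h1,h2⟩|⟨h1,h2⟩|⟨h1,h2⟩ <;>
        first | (exact absurd h2 (by decide)) | (subst h1; rfl)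
  · rintro rfl; rw [adj_rr]; exact ⟨rfl, by decide⟩

variable (G : SimpleGraph V) (S : Finset (V ⊕ V × Fin 5))

lemma struct_r (hS : InSDS (apxGraph G) S) (a : V) : Sum.inr (a,(2:Fin 5)) ∉ S := by
  intro hr
  have hs3 : Sum.inr (a,(3:Fin 5)) ∉ S := fun h => hS.1 _ hr _ h ((adj_to3 G _ a).mpr rfl)
  obtain ⟨d, hdS, hadj, hdom⟩ := hS.2.2 _ hs3
  have hd : d = Sum.inr (a,2) := (adj_to3 G d a).mp hadj.symm
  subst hd
  have ht4 : Sum.inr (a,(4:Fin 5)) ∉ S := fun h => hS.1 _ hr _ h ((adj_to4 G _ a).mpr rfl)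
  rcases hdom (Sum.inr (a,4)) with hmem | ⟨u, hu, hadj'⟩
  · rcases Finset.mem_insert.mp hmem with h | h
    · simp at h
    · exact ht4 (Finset.mem_of_mem_erase h)
  · have : u = Sum.inr (a,2) := (adj_to4 G u a).mp hadj'
    subst this
    rcases Finset.mem_insert.mp hu with h | h
    · simp at h
    · exact (Finset.notMem_erase _ _) h

lemma struct_s3 (hS : InSDS (apxGraph G) S) (a : V) : Sum.inr (a,(3:Fin 5)) ∈ S := by
  rcases hS.2.1 (Sum.inr (a,3)) with h | ⟨u, hu, hadj⟩
  · exact h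
  · have : u = Sum.inr (a,2) := (adj_to3 G u a).mp hadj
    subst this; exact absurd hu (struct_r G S hS a)

lemma struct_s4 (hS : InSDS (apxGraph G) S) (a : V) : Sum.inr (a,(4:Fin 5)) ∈ S := by
  rcases hS.2.1 (Sum.inr (a,4)) with h | ⟨u, hu, hadj⟩
  · exact h
  · have : u = Sum.inr (a,2) := (adj_to4 G u a).mp hadj
    subst this; exact absurd hu (struct_r G S hS a)

lemma struct_nboth (hS : InSDS (apxGraph G) S) (a : V) :
    ¬(Sum.inr (a,(0:Fin 5)) ∈ S ∧ Sum.inr (a,(1:Fin 5)) ∈ S) := by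
  rintro ⟨h0, h1⟩
  exact hS.1 _ h1 _ h0 ((adj_to0 G _ a).mpr rfl)

lemma struct_or (hS : InSDS (apxGraph G) S) (a : V) :
    Sum.inr (a,(0:Fin 5)) ∈ S ∨ Sum.inr (a,(1:Fin 5)) ∈ S := by
  rcases hS.2.1 (Sum.inr (a,0)) with h | ⟨u, hu, hadj⟩
  · exact Or.inl h
  · have : u = Sum.inr (a,1) := (adj_to0 G u a).mp hadj
    subst this; exact Or.inr hu

lemma struct_Tdom (hS : InSDS (apxGraph G) S) (a : V) :
    Sum.inl a ∈ S ∨ ∃ b, Sum.inl b ∈ S ∧ G.Adj b a := by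
  by_contra hcon
  push_neg at hcon
  obtain ⟨ha, hnb⟩ := hcon
  have hq : Sum.inr (a,(1:Fin 5)) ∈ S := by
    rcases hS.2.1 (Sum.inl a) with h | ⟨u, hu, hadj⟩
    · exact absurd h ha
    · rcases (adj_to_l G u a).mp hadj with ⟨b, rfl, hb⟩ | rfl | rfl
      · exact absurd hb (hnb b hu)
      · exact hu
      · exact absurd hu (struct_r G S hS a)
  have hp : Sum.inr (a,(0:Fin 5)) ∉ S := fun h => struct_nboth G S hS a ⟨h, hq⟩
  obtain ⟨d, hdS, hadj, hdom⟩ := hS.2.2 _ hp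
  have hd : d = Sum.inr (a,1) := (adj_to0 G d a).mp hadj.symm
  subst hd
  rcases hdom (Sum.inl a) with hmem | ⟨u, hu, hadj'⟩
  · rcases Finset.mem_insert.mp hmem with h | h
    · simp at h
    · exact ha (Finset.mem_of_mem_erase h)
  · rcases (adj_to_l G u a).mp hadj' with ⟨b, rfl, hb⟩ | rfl | rfl
    · rcases Finset.mem_insert.mp hu with h | h
      · simp at h
      · exact (hnb b (Finset.mem_of_mem_erase h)) hb
    · rcases Finset.mem_insert.mp hu with h | h
      · simp at h
      · exact (Finset.notMem_erase _ _) h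
    · rcases Finset.mem_insert.mp hu with h | h
      · simp at h
      · exact struct_r G S hS a (Finset.mem_of_mem_erase h)

def stdSet (D : Finset V) : Finset (V ⊕ V × Fin 5) :=
  D.image Sum.inl ∪ D.image (fun a => Sum.inr (a, 0)) ∪
    (Finset.univ \ D).image (fun a => Sum.inr (a, 1)) ∪
    Finset.univ.image (fun a => Sum.inr (a, (3:Fin 5))) ∪
    Finset.univ.image (fun a => Sum.inr (a, (4:Fin 5)))

lemma mem_std_l (D : Finset V) (a : V) : Sum.inl a ∈ stdSet D ↔ a ∈ D := by simp [stdSet]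
lemma mem_std_0 (D : Finset V) (a : V) : Sum.inr (a,(0:Fin 5)) ∈ stdSet D ↔ a ∈ D := by
  simp [stdSet, Prod.ext_iff]
lemma mem_std_1 (D : Finset V) (a : V) : Sum.inr (a,(1:Fin 5)) ∈ stdSet D ↔ a ∉ D := by
  simp [stdSet, Prod.ext_iff]
lemma mem_std_2 (D : Finset V) (a : V) : Sum.inr (a,(2:Fin 5)) ∉ stdSet D := by
  simp [stdSet, Prod.ext_iff]
lemma mem_std_3 (D : Finset V) (a : V) : Sum.inr (a,(3:Fin 5)) ∈ stdSet D := by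
  simp [stdSet, Prod.ext_iff]
lemma mem_std_4 (D : Finset V) (a : V) : Sum.inr (a,(4:Fin 5)) ∈ stdSet D := by
  simp [stdSet, Prod.ext_iff]

lemma std_indep (D : Finset V) (hDind : IndepSet G D) : IndepSet (apxGraph G) (stdSet D) := by
  intro x hx y hy hadj
  rcases y with b | ⟨b, j⟩
  · rcases (adj_to_l G x b).mp hadj with ⟨c, rfl, hc⟩ | rfl | rfl
    · exact hDind c ((mem_std_l D c).mp hx) b ((mem_std_l D b).mp hy) hc
    · exact ((mem_std_1 D b).mp hx) ((mem_std_l D b).mp hy)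
    · exact mem_std_2 D b hx
  · rcases fin5cases j with rfl|rfl|rfl|rfl|rfl
    · have := (adj_to0 G x b).mp hadj; subst this
      exact ((mem_std_1 D b).mp hx) ((mem_std_0 D b).mp hy)
    · rcases (adj_to1 G x b).mp hadj with rfl | rfl
      · exact ((mem_std_1 D b).mp hy) ((mem_std_l D b).mp hx)
      · exact ((mem_std_1 D b).mp hy) ((mem_std_0 D b).mp hx)
    · exact mem_std_2 D b hy
    · have := (adj_to3 G x b).mp hadj; subst this; exact mem_std_2 D b hx
    · have := (adj_to4 G x b).mp hadj; subst this; exact mem_std_2 D b hx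

lemma std_dom (D : Finset V) : DomSet (apxGraph G) (stdSet D) := by
  intro z
  rcases z with b | ⟨b, j⟩
  · by_cases hb : b ∈ D
    · exact Or.inl ((mem_std_l D b).mpr hb)
    · exact Or.inr ⟨Sum.inr (b,1), (mem_std_1 D b).mpr hb, (adj_to_l G _ b).mpr (Or.inr (Or.inl rfl))⟩
  · rcases fin5cases j with rfl|rfl|rfl|rfl|rfl
    · by_cases hb : b ∈ D
      · exact Or.inl ((mem_std_0 D b).mpr hb)
      · exact Or.inr ⟨Sum.inr (b,1), (mem_std_1 D b).mpr hb, (adj_to0 G _ b).mpr rfl⟩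
    · by_cases hb : b ∈ D
      · exact Or.inr ⟨Sum.inr (b,0), (mem_std_0 D b).mpr hb, (adj_to1 G _ b).mpr (Or.inr rfl)⟩
      · exact Or.inl ((mem_std_1 D b).mpr hb)
    · exact Or.inr ⟨Sum.inr (b,3), mem_std_3 D b, (adj_to2 G _ b).mpr (Or.inr (Or.inl rfl))⟩
    · exact Or.inl (mem_std_3 D b)
    · exact Or.inl (mem_std_4 D b)

lemma std_sec (D : Finset V) (hDdom : DomSet G D) :
    ∀ u ∉ stdSet D, ∃ v ∈ stdSet D, (apxGraph G).Adj u v ∧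
      DomSet (apxGraph G) (insert u ((stdSet D).erase v)) := by
  intro u hu
  have hins : ∀ (u' d' x : V ⊕ V × Fin 5),
      x ∈ insert u' ((stdSet D).erase d') ↔ x = u' ∨ (x ≠ d' ∧ x ∈ stdSet D) := fun u' d' x => by
    simp [Finset.mem_insert, Finset.mem_erase]
  rcases u with a | ⟨a, j⟩
  · have ha : a ∉ D := fun h => hu ((mem_std_l D a).mpr h)
    obtain ⟨w, hwD, hw⟩ : ∃ w ∈ D, G.Adj w a := by
      rcases hDdom a with h | ⟨w, hwD, hw⟩
      · exact absurd h ha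
      · exact ⟨w, hwD, hw⟩
    refine ⟨Sum.inl w, (mem_std_l D w).mpr hwD, (adj_ll G a w).mpr hw.symm, ?_⟩
    intro z
    rcases z with b | ⟨b, j⟩
    · by_cases hb : b = a
      · subst hb; exact Or.inl ((hins _ _ _).mpr (Or.inl rfl))
      · by_cases hbw : b = w
        · subst hbw
          exact Or.inr ⟨Sum.inl a, (hins _ _ _).mpr (Or.inl rfl),
            (adj_to_l G _ b).mpr (Or.inl ⟨a, rfl, hw.symm⟩)⟩
        · by_cases hbD : b ∈ D
          · exact Or.inl ((hins _ _ _).mpr (Or.inr ⟨by simpa using hbw, (mem_std_l D b).mpr hbD⟩))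
          · exact Or.inr ⟨Sum.inr (b,1), (hins _ _ _).mpr (Or.inr ⟨by simp, (mem_std_1 D b).mpr hbD⟩),
              (adj_to_l G _ b).mpr (Or.inr (Or.inl rfl))⟩
    · rcases fin5cases j with rfl|rfl|rfl|rfl|rfl
      · by_cases hb : b ∈ D
        · exact Or.inl ((hins _ _ _).mpr (Or.inr ⟨by simp, (mem_std_0 D b).mpr hb⟩))
        · exact Or.inr ⟨Sum.inr (b,1), (hins _ _ _).mpr (Or.inr ⟨by simp, (mem_std_1 D b).mpr hb⟩),
            (adj_to0 G _ b).mpr rfl⟩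
      · by_cases hb : b ∈ D
        · exact Or.inr ⟨Sum.inr (b,0), (hins _ _ _).mpr (Or.inr ⟨by simp, (mem_std_0 D b).mpr hb⟩),
            (adj_to1 G _ b).mpr (Or.inr rfl)⟩
        · exact Or.inl ((hins _ _ _).mpr (Or.inr ⟨by simp, (mem_std_1 D b).mpr hb⟩))
      · exact Or.inr ⟨Sum.inr (b,3), (hins _ _ _).mpr (Or.inr ⟨by simp, mem_std_3 D b⟩),
          (adj_to2 G _ b).mpr (Or.inr (Or.inl rfl))⟩
      · exact Or.inl ((hins _ _ _).mpr (Or.inr ⟨by simp, mem_std_3 D b⟩))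
      · exact Or.inl ((hins _ _ _).mpr (Or.inr ⟨by simp, mem_std_4 D b⟩))
  · rcases fin5cases j with rfl|rfl|rfl|rfl|rfl
    · -- u = p_a, a ∉ D, defender q_a
      have ha : a ∉ D := fun h => hu ((mem_std_0 D a).mpr h)
      refine ⟨Sum.inr (a,1), (mem_std_1 D a).mpr ha, (adj_to1 G _ a).mpr (Or.inr rfl), ?_⟩
      intro z
      rcases z with b | ⟨b, j⟩
      · by_cases hb : b ∈ D
        · exact Or.inl ((hins _ _ _).mpr (Or.inr ⟨by simp, (mem_std_l D b).mpr hb⟩))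
        · by_cases hba : b = a
          · subst hba
            obtain ⟨w, hwD, hw⟩ : ∃ w ∈ D, G.Adj w b := by
              rcases hDdom b with h | hh
              · exact absurd h hb
              · exact hh
            exact Or.inr ⟨Sum.inl w, (hins _ _ _).mpr (Or.inr ⟨by simp, (mem_std_l D w).mpr hwD⟩),
              (adj_to_l G _ b).mpr (Or.inl ⟨w, rfl, hw⟩)⟩
          · exact Or.inr ⟨Sum.inr (b,1), (hins _ _ _).mpr (Or.inr ⟨by simp [hba], (mem_std_1 D b).mpr hb⟩),
              (adj_to_l G _ b).mpr (Or.inr (Or.inl rfl))⟩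
      · rcases fin5cases j with rfl|rfl|rfl|rfl|rfl
        · by_cases hba : b = a
          · subst hba; exact Or.inl ((hins _ _ _).mpr (Or.inl rfl))
          · by_cases hb : b ∈ D
            · exact Or.inl ((hins _ _ _).mpr (Or.inr ⟨by simp, (mem_std_0 D b).mpr hb⟩))
            · exact Or.inr ⟨Sum.inr (b,1), (hins _ _ _).mpr (Or.inr ⟨by simp [hba], (mem_std_1 D b).mpr hb⟩),
                (adj_to0 G _ b).mpr rfl⟩
        · by_cases hba : b = a
          · subst hba
            exact Or.inr ⟨Sum.inr (b,0), (hins _ _ _).mpr (Or.inl rfl), (adj_to1 G _ b).mpr (Or.inr rfl)⟩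
          · by_cases hb : b ∈ D
            · exact Or.inr ⟨Sum.inr (b,0), (hins _ _ _).mpr (Or.inr ⟨by simp [hba], (mem_std_0 D b).mpr hb⟩),
                (adj_to1 G _ b).mpr (Or.inr rfl)⟩
            · exact Or.inl ((hins _ _ _).mpr (Or.inr ⟨by simp [hba], (mem_std_1 D b).mpr hb⟩))
        · exact Or.inr ⟨Sum.inr (b,3), (hins _ _ _).mpr (Or.inr ⟨by simp, mem_std_3 D b⟩),
            (adj_to2 G _ b).mpr (Or.inr (Or.inl rfl))⟩
        · exact Or.inl ((hins _ _ _).mpr (Or.inr ⟨by simp, mem_std_3 D b⟩))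
        · exact Or.inl ((hins _ _ _).mpr (Or.inr ⟨by simp, mem_std_4 D b⟩))
    · -- u = q_a, a ∈ D, defender p_a
      have ha : a ∈ D := by by_contra h; exact hu ((mem_std_1 D a).mpr h)
      refine ⟨Sum.inr (a,0), (mem_std_0 D a).mpr ha, (adj_to0 G _ a).mpr rfl, ?_⟩
      intro z
      rcases z with b | ⟨b, j⟩
      · by_cases hb : b ∈ D
        · exact Or.inl ((hins _ _ _).mpr (Or.inr ⟨by simp, (mem_std_l D b).mpr hb⟩))
        · exact Or.inr ⟨Sum.inr (b,1), (hins _ _ _).mpr (Or.inr ⟨by simp, (mem_std_1 D b).mpr hb⟩),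
            (adj_to_l G _ b).mpr (Or.inr (Or.inl rfl))⟩
      · rcases fin5cases j with rfl|rfl|rfl|rfl|rfl
        · by_cases hba : b = a
          · subst hba
            exact Or.inr ⟨Sum.inr (b,1), (hins _ _ _).mpr (Or.inl rfl), (adj_to0 G _ b).mpr rfl⟩
          · by_cases hb : b ∈ D
            · exact Or.inl ((hins _ _ _).mpr (Or.inr ⟨by simp [hba], (mem_std_0 D b).mpr hb⟩))
            · exact Or.inr ⟨Sum.inr (b,1), (hins _ _ _).mpr (Or.inr ⟨by simp, (mem_std_1 D b).mpr hb⟩),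
                (adj_to0 G _ b).mpr rfl⟩
        · by_cases hba : b = a
          · subst hba; exact Or.inl ((hins _ _ _).mpr (Or.inl rfl))
          · by_cases hb : b ∈ D
            · exact Or.inr ⟨Sum.inr (b,0), (hins _ _ _).mpr (Or.inr ⟨by simp [hba], (mem_std_0 D b).mpr hb⟩),
                (adj_to1 G _ b).mpr (Or.inr rfl)⟩
            · exact Or.inl ((hins _ _ _).mpr (Or.inr ⟨by simp, (mem_std_1 D b).mpr hb⟩))
        · exact Or.inr ⟨Sum.inr (b,3), (hins _ _ _).mpr (Or.inr ⟨by simp, mem_std_3 D b⟩),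
            (adj_to2 G _ b).mpr (Or.inr (Or.inl rfl))⟩
        · exact Or.inl ((hins _ _ _).mpr (Or.inr ⟨by simp, mem_std_3 D b⟩))
        · exact Or.inl ((hins _ _ _).mpr (Or.inr ⟨by simp, mem_std_4 D b⟩))
    · -- u = r_a, defender s_a
      refine ⟨Sum.inr (a,3), mem_std_3 D a, (adj_to3 G _ a).mpr rfl, ?_⟩
      intro z
      rcases z with b | ⟨b, j⟩
      · by_cases hb : b ∈ D
        · exact Or.inl ((hins _ _ _).mpr (Or.inr ⟨by simp, (mem_std_l D b).mpr hb⟩))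
        · exact Or.inr ⟨Sum.inr (b,1), (hins _ _ _).mpr (Or.inr ⟨by simp, (mem_std_1 D b).mpr hb⟩),
            (adj_to_l G _ b).mpr (Or.inr (Or.inl rfl))⟩
      · rcases fin5cases j with rfl|rfl|rfl|rfl|rfl
        · by_cases hb : b ∈ D
          · exact Or.inl ((hins _ _ _).mpr (Or.inr ⟨by simp, (mem_std_0 D b).mpr hb⟩))
          · exact Or.inr ⟨Sum.inr (b,1), (hins _ _ _).mpr (Or.inr ⟨by simp, (mem_std_1 D b).mpr hb⟩),
              (adj_to0 G _ b).mpr rfl⟩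
        · by_cases hb : b ∈ D
          · exact Or.inr ⟨Sum.inr (b,0), (hins _ _ _).mpr (Or.inr ⟨by simp, (mem_std_0 D b).mpr hb⟩),
              (adj_to1 G _ b).mpr (Or.inr rfl)⟩
          · exact Or.inl ((hins _ _ _).mpr (Or.inr ⟨by simp, (mem_std_1 D b).mpr hb⟩))
        · by_cases hba : b = a
          · subst hba; exact Or.inl ((hins _ _ _).mpr (Or.inl rfl))
          · exact Or.inr ⟨Sum.inr (b,3), (hins _ _ _).mpr (Or.inr ⟨by simp [hba], mem_std_3 D b⟩),
              (adj_to2 G _ b).mpr (Or.inr (Or.inl rfl))⟩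
        · by_cases hba : b = a
          · subst hba
            exact Or.inr ⟨Sum.inr (b,2), (hins _ _ _).mpr (Or.inl rfl), (adj_to3 G _ b).mpr rfl⟩
          · exact Or.inl ((hins _ _ _).mpr (Or.inr ⟨by simp [hba], mem_std_3 D b⟩))
        · exact Or.inl ((hins _ _ _).mpr (Or.inr ⟨by simp, mem_std_4 D b⟩))
    · exact absurd (mem_std_3 D a) hu
    · exact absurd (mem_std_4 D a) hu

lemma std_card (D : Finset V) : (stdSet D).card = D.card + 3 * Fintype.card V := by
  have h := card_split (stdSet D) (fun a => mem_std_2 D a) (mem_std_3 D) (mem_std_4 D)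
    (fun a h => (mem_std_1 D a).mp h.2 ((mem_std_0 D a).mp h.1))
    (fun a => by
      by_cases h : a ∈ D
      · exact Or.inl ((mem_std_0 D a).mpr h)
      · exact Or.inr ((mem_std_1 D a).mpr h))
  rw [h]
  congr 1
  have : (Finset.univ.filter fun a : V => Sum.inl a ∈ stdSet D) = D := by
    ext a; simp [mem_std_l]
  rw [this]

theorem stmt19 (G : SimpleGraph V) [DecidableRel G.Adj] (hdeg : G.maxDegree ≤ 3)
    (n : ℕ) (hn : Fintype.card V = n)
    (D : Finset V) (hDind : IndepSet G D) (hDdom : DomSet G D)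
    (hDmin : ∀ D' : Finset V, IndepSet G D' → DomSet G D' → D.card ≤ D'.card)
    (S : Finset (V ⊕ V × Fin 5)) (hS : InSDS (apxGraph G) S)
    (hSmin : ∀ S' : Finset (V ⊕ V × Fin 5), InSDS (apxGraph G) S' → S.card ≤ S'.card) :
    S.card = D.card + 3 * n := by
  classical
  have hstd : InSDS (apxGraph G) (stdSet D) :=
    ⟨std_indep G D hDind, std_dom G D, std_sec G D hDdom⟩
  have hub : S.card ≤ D.card + 3 * n := by
    have h := hSmin _ hstd
    rwa [std_card, hn] at h
  set T : Finset V := Finset.univ.filter (fun a : V => Sum.inl a ∈ S) with hT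
  have hcard : S.card = T.card + 3 * Fintype.card V :=
    card_split S (struct_r G S hS) (struct_s3 G S hS) (struct_s4 G S hS)
      (struct_nboth G S hS) (struct_or G S hS)
  have hTind : IndepSet G T := by
    intro a haT b hbT hab
    exact hS.1 _ (by simpa [hT] using haT) _ (by simpa [hT] using hbT) ((adj_ll G a b).mpr hab)
  have hTdom : DomSet G T := by
    intro a
    rcases struct_Tdom G S hS a with h | ⟨b, hb, hba⟩
    · exact Or.inl (by simpa [hT])
    · exact Or.inr ⟨b, by simpa [hT] using hb, hba⟩
  have hDT := hDmin T hTind hTdom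
  rw [hn] at hcard
  omega
end
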